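/- arXiv:2109.04805 — 9 statements merged into one kernel-verified Lean document; each statement's English description precedes it below -/
import Mathlib

section
/- Let X be a set, F a field, d a positive integer, and f : X → F^d. Then the Littlestone dimension of the family C_f = {Z_{f,a} : a ∈ F^d, a ≠ 0} is strictly less than d; that is, there is no well-labeled (X, C_f)-labeled tree of depth d. -/
open scoped Classical

/-- The zero set of the linear combination of the components of `f` with coefficients `a`. -/
def zeroSet {X F : Type*} [Field F] {d : ℕ} (f : X → Fin d → F) (a : Fin d → F) : Set X :=
  {c | ∑ i, a i * f c i = 0}

/-- The family of zero sets of nontrivial linear combinations of the components of `f`. -/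
def zeroSets {X F : Type*} [Field F] {d : ℕ} (f : X → Fin d → F) : Set (Set X) :=
  {s | ∃ a : Fin d → F, a ≠ 0 ∧ s = zeroSet f a}

/-- The leaf `τ` of a binary tree of depth `n` with node labels `t` and leaf label `A`
is well-labeled: for each `k < n`, the label of the node at the restriction of `τ` to
its first `k` entries belongs to `A` iff `τ k = true`. -/
def WellLabeledLeaf {X : Type*} (n : ℕ) (t : (k : ℕ) → (Fin k → Bool) → X)
    (A : Set X) (τ : Fin n → Bool) : Prop :=
  ∀ k : Fin n, (t k.val (fun j : Fin k.val => τ (Fin.castLE k.isLt.le j)) ∈ A) ↔ τ k = true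

/-- There is an `(X, C)`-labeled tree of depth `n` all of whose leaves are well-labeled. -/
def HasWellLabeledTree {X : Type*} (C : Set (Set X)) (n : ℕ) : Prop :=
  ∃ (t : (k : ℕ) → (Fin k → Bool) → X) (L : (Fin n → Bool) → Set X),
    (∀ τ, L τ ∈ C) ∧ ∀ τ, WellLabeledLeaf n t (L τ) τ

/-- span of the vectors at earlier true-labeled nodes along prefix `σ`. -/
def prevSpan {X F : Type*} [Field F] {d : ℕ} (f : X → Fin d → F)
    (t : (k : ℕ) → (Fin k → Bool) → X) (k : ℕ) (σ : Fin k → Bool) : Submodule F (Fin d → F) :=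
  Submodule.span F
    {v | ∃ j : Fin k, σ j = true ∧ v = f (t j.val (fun i => σ (Fin.castLE j.isLt.le i)))}

/-- The greedy branch: go "false" exactly when the current vector is in the span of
earlier true vectors. -/
noncomputable def branch {X F : Type*} [Field F] {d : ℕ} (f : X → Fin d → F)
    (t : (k : ℕ) → (Fin k → Bool) → X) : (k : ℕ) → Fin k → Bool
  | 0 => Fin.elim0
  | k + 1 => Fin.snoc (branch f t k)
      (if f (t k (branch f t k)) ∈ prevSpan f t k (branch f t k) then false else true)

lemma branch_castLE {X F : Type*} [Field F] {d : ℕ} (f : X → Fin d → F)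
    (t : (k : ℕ) → (Fin k → Bool) → X) :
    ∀ (m k : ℕ) (h : k ≤ m) (j : Fin k), branch f t m (Fin.castLE h j) = branch f t k j := by
  intro m
  induction m with
  | zero =>
    intro k h j
    obtain rfl : k = 0 := Nat.le_zero.mp h
    exact j.elim0
  | succ m ih =>
    intro k h j
    rcases eq_or_lt_of_le h with rfl | hlt
    · exact congrArg _ (Fin.ext rfl)
    · have hk : k ≤ m := Nat.lt_succ_iff.mp hlt
      have : (Fin.castLE h j) = Fin.castSucc (Fin.castLE hk j) := Fin.ext rfl
      rw [this, branch, Fin.snoc_castSucc, ih k hk j]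

/-- The Littlestone dimension of `C_f` is strictly less than `d`:
there is no well-labeled `(X, C_f)`-labeled tree of depth `d`. -/
theorem statement1 {X F : Type*} [Field F] {d : ℕ} (hd : 0 < d) (f : X → Fin d → F) :
    ¬ HasWellLabeledTree (zeroSets f) d := by
  rintro ⟨t, L, hL, hwell⟩
  set τ : Fin d → Bool := branch f t d with hτ
  -- node along the branch at depth k
  set x : Fin d → X := fun k => t k.val (fun j => τ (Fin.castLE k.isLt.le j)) with hx
  obtain ⟨a, ha0, hLa⟩ := hL τ
  have hleaf : ∀ k : Fin d, (∑ i, a i * f (x k) i = 0) ↔ τ k = true := by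
    intro k
    have := hwell τ k
    rw [hLa] at this
    exact this
  -- prefixes of τ agree with branch at every level
  have hpref : ∀ (k : Fin d) (i : Fin k.val),
      τ (Fin.castLE k.isLt.le i) = branch f t k.val i := by
    intro k i
    exact branch_castLE f t d k.val k.isLt.le i
  have hxk : ∀ k : Fin d, x k = t k.val (branch f t k.val) := by
    intro k
    simp only [hx]
    congr 1
    funext i
    exact hpref k i
  -- the value of τ at k is given by the membership test
  have hval : ∀ k : Fin d,
      τ k = if f (x k) ∈ prevSpan f t k.val (branch f t k.val) then false else true := by
    intro k
    have h1 : k = Fin.castLE k.isLt (Fin.last k.val) := Fin.ext rfl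
    rw [hxk k]
    calc τ k = branch f t d (Fin.castLE k.isLt (Fin.last k.val)) := by rw [← h1]
      _ = branch f t (k.val + 1) (Fin.last k.val) :=
          branch_castLE f t d (k.val + 1) k.isLt (Fin.last k.val)
      _ = _ := by rw [branch, Fin.snoc_last]
  -- the dot-product-with-a linear map
  let φ : (Fin d → F) →ₗ[F] F := ∑ i, a i • LinearMap.proj i
  have hφ : ∀ v : Fin d → F, φ v = ∑ i, a i * v i := by
    intro v
    simp [φ, LinearMap.proj]
  have hnode : ∀ (k : Fin d) (j : Fin k.val),
      t j.val (fun i => branch f t k.val (Fin.castLE j.isLt.le i))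
        = x (Fin.castLE k.isLt.le j) := by
    intro k j
    simp only [hx]
    congr 1
    funext i
    have h2 : Fin.castLE (Fin.castLE k.isLt.le j).isLt.le i
        = Fin.castLE k.isLt.le (Fin.castLE j.isLt.le i) := Fin.ext rfl
    rw [h2, hpref k (Fin.castLE j.isLt.le i), branch_castLE f t k.val j.val j.isLt.le i]
  -- prevSpan generators are killed by φ
  have hker : ∀ k : Fin d, prevSpan f t k.val (branch f t k.val) ≤ LinearMap.ker φ := by
    intro k
    rw [prevSpan, Submodule.span_le]
    rintro v ⟨j, hj, rfl⟩
    have hjτ : τ (Fin.castLE k.isLt.le j) = true := by rw [hpref k j]; exact hj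
    have := (hleaf (Fin.castLE k.isLt.le j)).mpr hjτ
    simp only [LinearMap.mem_ker, SetLike.mem_coe]
    rw [hφ, hnode k j]
    exact this
  -- every label along the branch is true
  have htrue : ∀ k : Fin d, τ k = true := by
    intro k
    by_contra hf
    have hfalse : τ k = false := by cases h : τ k; rfl; exact absurd h hf
    have hmem : f (x k) ∈ prevSpan f t k.val (branch f t k.val) := by
      by_contra hm
      rw [hval k, if_neg hm] at hfalse
      exact Bool.noConfusion hfalse
    have : φ (f (x k)) = 0 := hker k hmem
    rw [hφ] at this
    exact hf ((hleaf k).mp this)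
  -- hence the vectors f (x k) are linearly independent
  have hspanEq : ∀ k : Fin d,
      prevSpan f t k.val (branch f t k.val)
        = Submodule.span F (Set.range fun j : Fin k.val => f (x (Fin.castLE k.isLt.le j))) := by
    intro k
    rw [prevSpan]
    congr 1
    ext v
    constructor
    · rintro ⟨j, _, rfl⟩
      exact ⟨j, (congrArg f (hnode k j)).symm⟩
    · rintro ⟨j, rfl⟩
      refine ⟨j, ?_, (congrArg f (hnode k j)).symm⟩
      rw [← hpref k j]
      exact htrue _
  have hnotmem : ∀ k : Fin d,
      f (x k) ∉ Submodule.span F (Set.range fun j : Fin k.val => f (x (Fin.castLE k.isLt.le j))) := by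
    intro k hmem
    rw [← hspanEq k] at hmem
    have := hval k
    rw [if_pos hmem] at this
    rw [htrue k] at this
    exact Bool.true_eq_false.mp this
  -- linear independence by induction along the branch, via snoc
  have hli : ∀ (k : ℕ) (hk : k ≤ d),
      LinearIndependent F (fun j : Fin k => f (x (Fin.castLE hk j))) := by
    intro k
    induction k with
    | zero => intro hk; exact linearIndependent_empty_type
    | succ k ih =>
      intro hk
      have hk' : k ≤ d := Nat.le_of_succ_le hk
      have hkd : k < d := hk
      have heq : (fun j : Fin (k+1) => f (x (Fin.castLE hk j)))
          = Fin.snoc (fun j : Fin k => f (x (Fin.castLE hk' j))) (f (x ⟨k, hkd⟩)) := by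
        funext j
        rcases Fin.eq_castSucc_or_eq_last j with ⟨i, rfl⟩ | rfl
        · have h3 : Fin.castLE hk (Fin.castSucc i) = Fin.castLE hk' i := Fin.ext rfl
          simp only [Fin.snoc_castSucc, h3]
        · have h4 : Fin.castLE hk (Fin.last k) = (⟨k, hkd⟩ : Fin d) := Fin.ext rfl
          simp only [Fin.snoc_last, h4]
      rw [heq, linearIndependent_fin_snoc]
      refine ⟨ih hk', ?_⟩
      have hxx : (fun j : Fin k => f (x (Fin.castLE hk' j)))
          = fun j : Fin k => f (x (Fin.castLE (Fin.mk k hkd).isLt.le j)) := rfl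
      rw [hxx]
      exact hnotmem ⟨k, hkd⟩
  have hliD : LinearIndependent F (fun k : Fin d => f (x k)) := by
    exact hli d le_rfl
  -- d independent vectors in F^d form a basis, so φ = 0
  haveI : Nonempty (Fin d) := ⟨⟨0, hd⟩⟩
  have hcard : Fintype.card (Fin d) = Module.finrank F (Fin d → F) := by
    simp [Module.finrank_fintype_fun_eq_card]
  let b := basisOfLinearIndependentOfCardEqFinrank hliD hcard
  have hφ0 : φ = 0 := by
    apply b.ext
    intro k
    have hb : b k = f (x k) := by
      simp [b, coe_basisOfLinearIndependentOfCardEqFinrank]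
    rw [hb, hφ]
    simpa using (hleaf k).mpr (htrue k)
  apply ha0
  funext i
  have := congrArg (fun ψ : (Fin d → F) →ₗ[F] F => ψ (Pi.single i 1)) hφ0
  simp only [LinearMap.zero_apply] at this
  rw [hφ] at this
  simpa [Pi.single_apply, Finset.sum_ite_eq] using this
end

section
/- Let X be a set, F a field, d a positive integer, and f : X → F^d linearly independent (the component functions f_0,...,f_{d-1} are linearly independent in the F-vector space of functions X → F). Then the family C_f = {Z_{f,a} : a ∈ F^d, a ≠ 0} shatters some subset of X of size d − 1; in particular, the VC-dimension of C_f is at least d − 1. -/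
/-- A family of sets `C` shatters `Y` if every subset of `Y` is the trace of a member of `C`. -/
def ShattersSet {X : Type*} (C : Set (Set X)) (Y : Set X) : Prop :=
  ∀ Z ⊆ Y, ∃ A ∈ C, A ∩ Y = Z

/-- Any linear functional on `F^d` is given by coefficients against `Pi.single`. -/
lemma dot_formula {F : Type*} [Field F] {d : ℕ} (φ : (Fin d → F) →ₗ[F] F) (v : Fin d → F) :
    φ v = ∑ i, v i * φ (Pi.single i 1) := by
  rw [LinearMap.pi_apply_eq_sum_univ φ v]
  refine Finset.sum_congr rfl fun i _ => ?_
  rw [smul_eq_mul]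
  congr 1
  congr 1
  ext j
  simp [Pi.single_apply, eq_comm]

/-- If the component functions are linearly independent, the values of `f` span `F^d`. -/
lemma span_range_eq_top {X F : Type*} [Field F] {d : ℕ} (f : X → Fin d → F)
    (hf : LinearIndependent F (fun i : Fin d => fun x : X => f x i)) :
    Submodule.span F (Set.range f) = ⊤ := by
  by_contra h
  obtain ⟨φ, hφ0, hφ⟩ := Submodule.exists_dual_map_eq_bot_of_lt_top
    (lt_top_iff_ne_top.mpr h) inferInstance
  set a : Fin d → F := fun i => φ (Pi.single i 1) with ha
  have hφv : ∀ v ∈ Submodule.span F (Set.range f), φ v = 0 := by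
    intro v hv
    have : φ v ∈ (Submodule.span F (Set.range f)).map φ := ⟨v, hv, rfl⟩
    rwa [hφ, Submodule.mem_bot] at this
  have hsum : (∑ i, a i • (fun x : X => f x i)) = 0 := by
    funext x
    have h1 : φ (f x) = 0 := hφv _ (Submodule.subset_span ⟨x, rfl⟩)
    rw [dot_formula] at h1
    simpa [mul_comm, Finset.sum_apply] using h1
  have hall := Fintype.linearIndependent_iff.mp hf a hsum
  apply hφ0
  apply LinearMap.ext
  intro v
  rw [dot_formula]
  have h2 : ∀ i, φ (Pi.single i 1) = 0 := hall
  simp [h2]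

/-- If the component functions of `f : X → F^d` are linearly independent,
then `C_f` shatters some subset of `X` of size `d - 1`; in particular its
VC-dimension is at least `d - 1`. -/
theorem statement3 {X F : Type*} [Field F] {d : ℕ} (hd : 0 < d) (f : X → Fin d → F)
    (hf : LinearIndependent F (fun i : Fin d => fun x : X => f x i)) :
    ∃ Y : Finset X, Y.card = d - 1 ∧ ShattersSet (zeroSets f) ↑Y := by
  classical
  obtain ⟨n, rfl⟩ : ∃ n, d = n + 1 := ⟨d - 1, (Nat.succ_pred_eq_of_pos hd).symm⟩
  have htop := span_range_eq_top f hf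
  -- extract a basis of F^d inside the range of f
  obtain ⟨b, hbsub, hbspan, hbli⟩ := exists_linearIndependent F (Set.range f)
  rw [htop] at hbspan
  let B : Module.Basis b F (Fin (n + 1) → F) :=
    Module.Basis.mk hbli (by rw [Subtype.range_coe, hbspan])
  let e : b ≃ Fin (n + 1) := B.indexEquiv (Pi.basisFun F (Fin (n + 1)))
  let β : Module.Basis (Fin (n + 1)) F (Fin (n + 1) → F) := B.reindex e
  have hβmem : ∀ j, β j ∈ Set.range f := by
    intro j
    have : β j = (e.symm j : Fin (n + 1) → F) := by
      simp [β, B, Module.Basis.reindex_apply, Module.Basis.mk_apply]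
    rw [this]
    exact hbsub (e.symm j).2
  choose x hx using hβmem
  have hxinj : Function.Injective x := by
    intro i j hij
    apply β.injective
    rw [← hx, ← hx, hij]
  -- the shattered set
  refine ⟨Finset.image (fun k : Fin n => x k.castSucc) Finset.univ, ?_, ?_⟩
  · rw [Finset.card_image_of_injective _ (fun i j hij =>
      Fin.castSucc_injective n (hxinj hij))]
    simp
  · intro Z hZ
    have hlast : x (Fin.last n) ∉ Z := by
      intro hmem
      have := hZ hmem
      simp only [Finset.coe_image, Finset.coe_univ, Set.image_univ, Set.mem_range] at this
      obtain ⟨k, hk⟩ := this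
      exact (Fin.castSucc_lt_last k).ne (hxinj hk)
    set c : Fin (n + 1) → F := fun j => if x j ∈ Z then 0 else 1 with hc
    set φ : (Fin (n + 1) → F) →ₗ[F] F := β.constr F c with hφ
    set a : Fin (n + 1) → F := fun i => φ (Pi.single i 1) with ha
    have key : ∀ j, ∑ i, a i * f (x j) i = c j := by
      intro j
      have h1 : φ (f (x j)) = c j := by rw [hx j]; exact β.constr_basis F c j
      rw [dot_formula] at h1
      rw [← h1]
      exact Finset.sum_congr rfl fun i _ => mul_comm _ _
    have hane : a ≠ 0 := by
      intro h0
      have := key (Fin.last n)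
      rw [h0] at this
      simp [hc, hlast] at this
    refine ⟨zeroSet f a, ⟨a, hane, rfl⟩, ?_⟩
    ext y
    simp only [Set.mem_inter_iff, Finset.coe_image, Finset.coe_univ, Set.image_univ,
      Set.mem_range, zeroSet, Set.mem_setOf_eq]
    constructor
    · rintro ⟨hy0, k, rfl⟩
      rw [key] at hy0
      by_contra hyZ
      rw [hc] at hy0
      simp [hyZ] at hy0
    · intro hyZ
      obtain ⟨k, hk⟩ : ∃ k : Fin n, x k.castSucc = y := by
        have := hZ hyZ
        simpa using this
      refine ⟨?_, k, hk⟩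
      rw [← hk, key, hc]
      simp [hk, hyZ]
end

section
/- Let X be a set, F a field, d a positive integer, and f : X → F^d. Suppose there exist one-dimensional linear subspaces V_0, ..., V_{k-1} of F^d such that f(X) ⊆ V_0 ∪ ... ∪ V_{k-1}. Then the family C_f = {Z_{f,a} : a ∈ F^d, a ≠ 0} has at most 2^k elements. -/
/-- If the image of `f` is covered by `k` one-dimensional subspaces
`V_0, ..., V_{k-1}` of `F^d`, then `C_f` has at most `2^k` elements. -/
theorem statement6 {X F : Type*} [Field F] {d : ℕ} (hd : 0 < d) (f : X → Fin d → F)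
    (k : ℕ) (V : Fin k → Submodule F (Fin d → F))
    (hV : ∀ i, Module.finrank F (V i) = 1)
    (hcov : ∀ x : X, ∃ i, f x ∈ V i) :
    (zeroSets f).ncard ≤ 2 ^ k := by
  classical
  -- pick a generator of each `V i`
  have hgen : ∀ i, ∃ v : V i, v ≠ 0 ∧ ∀ w : V i, ∃ c : F, c • v = w := by
    intro i
    obtain ⟨v, hv0, hv⟩ := (finrank_eq_one_iff').mp (hV i)
    exact ⟨v, hv0, hv⟩
  choose v hv0 hv using hgen
  -- the map from subsets of `Fin k` to candidate zero sets
  set g : Set (Fin k) → Set X :=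
    fun T => {x | f x = 0 ∨ ∃ i ∈ T, f x ∈ V i} with hg
  have hsub : zeroSets f ⊆ Set.range g := by
    rintro s ⟨a, -, rfl⟩
    refine ⟨{i | ∑ j, a j * (v i : Fin d → F) j = 0}, ?_⟩
    ext x
    simp only [hg, Set.mem_setOf_eq, zeroSet]
    constructor
    · rintro (h0 | ⟨i, hi, hxi⟩)
      · simp [h0]
      · obtain ⟨c, hc⟩ := hv i ⟨f x, hxi⟩
        have hfx : f x = c • (v i : Fin d → F) := by
          have := congrArg (Subtype.val) hc
          simpa using this.symm
        have : ∑ j, a j * (c • (v i : Fin d → F)) j = c * ∑ j, a j * (v i : Fin d → F) j := by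
          rw [Finset.mul_sum]
          exact Finset.sum_congr rfl fun j _ => by simp [Pi.smul_apply]; ring
        rw [hfx, this, hi, mul_zero]
    · intro hsum
      by_cases h0 : f x = 0
      · exact Or.inl h0
      · obtain ⟨i, hxi⟩ := hcov x
        obtain ⟨c, hc⟩ := hv i ⟨f x, hxi⟩
        have hfx : f x = c • (v i : Fin d → F) := by
          have := congrArg (Subtype.val) hc
          simpa using this.symm
        have hc0 : c ≠ 0 := by
          rintro rfl
          exact h0 (by simpa using hfx)
        refine Or.inr ⟨i, ?_, hxi⟩
        have h1 : c * ∑ j, a j * (v i : Fin d → F) j = ∑ j, a j * f x j := by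
          rw [Finset.mul_sum]
          exact Finset.sum_congr rfl fun j _ => by rw [hfx]; simp [Pi.smul_apply]; ring
        exact (mul_eq_zero.mp (h1.trans hsum)).resolve_left hc0
  calc (zeroSets f).ncard ≤ (Set.range g).ncard :=
        Set.ncard_le_ncard hsub (Set.finite_range g)
    _ ≤ Nat.card (Set (Fin k)) := by
        rw [← Nat.card_coe_set_eq]; exact Finite.card_range_le g
    _ = 2 ^ k := by simp [Nat.card_eq_fintype_card]
end

section
/- Let X be a set, F a field, d a positive integer, and f : X → F^d. If f(X) is not contained in any finite union of proper linear subspaces of F^d, then there exists a sequence (c_i)_{i ∈ ℕ} of elements of X such that for every finite set I ⊆ ℕ with |I| ≤ d, the set {f(c_i) : i ∈ I} is linearly independent in F^d. -/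
/-- Auxiliary: build a sequence by recursion where each term may depend on all
previous terms (given as a `Fin n → X` prefix). -/
noncomputable def stmt7Seq {X : Type*} (pick : ∀ n, (Fin n → X) → X) : (n : ℕ) → Fin n → X
  | 0 => Fin.elim0
  | n + 1 => Fin.snoc (stmt7Seq pick n) (pick n (stmt7Seq pick n))

/-- If the image of `f : X → F^d` is not contained in any finite union of
proper linear subspaces of `F^d`, then there is a sequence `(c_i)` in `X` such that the
image under `f` of any at most `d` of its terms is linearly independent. -/
theorem statement7 {X F : Type*} [Field F] {d : ℕ} (hd : 0 < d) (f : X → Fin d → F)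
    (hcov : ¬ ∃ (k : ℕ) (V : Fin k → Submodule F (Fin d → F)),
      (∀ i, V i ≠ ⊤) ∧ ∀ x : X, ∃ i, f x ∈ V i) :
    ∃ c : ℕ → X, ∀ I : Finset ℕ, I.card ≤ d →
      LinearIndependent F (fun i : I => f (c i.1)) := by
  classical
  push_neg at hcov
  -- hcov : ∀ k V, (∀ i, V i ≠ ⊤) → ∃ x, ∀ i, f x ∉ V i
  have hsel : ∀ T : Finset (Submodule F (Fin d → F)), (∀ V ∈ T, V ≠ ⊤) →
      ∃ x : X, ∀ V ∈ T, f x ∉ V := by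
    intro T hT
    obtain ⟨x, hx⟩ := hcov T.card (fun i => ((T.equivFin.symm i : T) : Submodule F (Fin d → F)))
      (fun i => hT _ (T.equivFin.symm i).2)
    refine ⟨x, fun V hV => ?_⟩
    have := hx (T.equivFin ⟨V, hV⟩)
    simpa using this
  have hproper : ∀ s : Finset (Fin d → F), s.card ≤ d - 1 →
      Submodule.span F (s : Set (Fin d → F)) ≠ ⊤ := by
    intro s hs hTop
    have h1 : Module.finrank F (Submodule.span F (s : Set (Fin d → F))) ≤ s.card :=
      finrank_span_finset_le_card (R := F) s
    rw [hTop, finrank_top] at h1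
    have h2 : Module.finrank F (Fin d → F) = d := Module.finrank_fin_fun F
    omega
  have hpick : ∀ n (prev : Fin n → X), ∃ x : X, ∀ S : Finset (Fin n), S.card ≤ d - 1 →
      f x ∉ Submodule.span F
        ((S.image fun i => f (prev i) : Finset (Fin d → F)) : Set (Fin d → F)) := by
    intro n prev
    obtain ⟨x, hx⟩ := hsel ((Finset.univ.filter fun S : Finset (Fin n) => S.card ≤ d - 1).image
      fun S => Submodule.span F
        ((S.image fun i => f (prev i) : Finset (Fin d → F)) : Set (Fin d → F)))
      (by
        intro V hV
        simp only [Finset.mem_image, Finset.mem_filter, Finset.mem_univ, true_and] at hV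
        obtain ⟨S, hS, rfl⟩ := hV
        exact hproper _ (le_trans (Finset.card_image_le) hS))
    exact ⟨x, fun S hS => hx _ (Finset.mem_image_of_mem _ (by simp [hS]))⟩
  let pick : ∀ n, (Fin n → X) → X := fun n prev => (hpick n prev).choose
  have hpick' : ∀ n (prev : Fin n → X), ∀ S : Finset (Fin n), S.card ≤ d - 1 →
      f (pick n prev) ∉ Submodule.span F
        ((S.image fun i => f (prev i) : Finset (Fin d → F)) : Set (Fin d → F)) :=
    fun n prev => (hpick n prev).choose_spec
  let c : ℕ → X := fun n => stmt7Seq pick (n + 1) (Fin.last n)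
  have hc : ∀ n, c n = pick n (stmt7Seq pick n) := by
    intro n
    show stmt7Seq pick (n + 1) (Fin.last n) = _
    simp [stmt7Seq]
  have coh : ∀ n (i : Fin n), stmt7Seq pick n i = c i.val := by
    intro n
    induction n with
    | zero => exact fun i => i.elim0
    | succ n ih =>
      intro i
      refine Fin.lastCases ?_ ?_ i
      · rfl
      · intro j
        have h1 : stmt7Seq pick (n + 1) j.castSucc = stmt7Seq pick n j := by
          simp [stmt7Seq]
        rw [h1, ih j]
        rfl
  have keyP : ∀ n (S : Finset ℕ), (∀ i ∈ S, i < n) → S.card ≤ d - 1 →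
      f (c n) ∉ Submodule.span F
        ((S.image fun i => f (c i) : Finset (Fin d → F)) : Set (Fin d → F)) := by
    intro n S hlt hcard
    have h1 := hpick' n (stmt7Seq pick n) (S.attachFin hlt)
      (by rwa [Finset.card_attachFin])
    have himg : (S.attachFin hlt).image (fun i => f (stmt7Seq pick n i)) =
        S.image fun i => f (c i) := by
      ext v
      simp only [Finset.mem_image, Finset.mem_attachFin]
      constructor
      · rintro ⟨i, hi, rfl⟩
        exact ⟨i.val, hi, by rw [coh]⟩
      · rintro ⟨i, hi, rfl⟩
        exact ⟨⟨i, hlt i hi⟩, hi, by rw [coh]⟩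
    rw [himg] at h1
    rwa [hc n]
  refine ⟨c, fun I hI => ?_⟩
  rw [Fintype.linearIndependent_iff]
  intro g hg
  by_contra hne
  push_neg at hne
  obtain ⟨i₀, hi₀⟩ := hne
  set g' : ℕ → F := fun i => if h : i ∈ I then g ⟨i, h⟩ else 0 with hg'
  have hgsum : ∑ i ∈ I, g' i • f (c i) = 0 := by
    rw [← Finset.sum_attach I (fun i => g' i • f (c i))]
    rw [← hg]
    rw [Finset.univ_eq_attach]
    refine Finset.sum_congr rfl (fun i _ => ?_)
    simp [hg', i.2]
  set S : Finset ℕ := I.filter fun i => g' i ≠ 0 with hSdef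
  have hSne : S.Nonempty := by
    refine ⟨i₀.val, Finset.mem_filter.2 ⟨i₀.2, ?_⟩⟩
    simp only [hg', i₀.2, dif_pos]
    simpa using hi₀
  set m := S.max' hSne with hm
  have hmS : m ∈ S := S.max'_mem hSne
  have hmI : m ∈ I := (Finset.mem_filter.1 hmS).1
  have hgm : g' m ≠ 0 := (Finset.mem_filter.1 hmS).2
  have hsum2 : ∑ i ∈ S, g' i • f (c i) = 0 := by
    rw [← hgsum]
    refine Finset.sum_subset (Finset.filter_subset _ _) (fun x hx hnx => ?_)
    have hx0 : g' x = 0 := by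
      by_contra h
      exact hnx (Finset.mem_filter.2 ⟨hx, h⟩)
    simp [hx0]
  have herase : g' m • f (c m) = - ∑ i ∈ S.erase m, g' i • f (c i) := by
    have h3 := Finset.sum_erase_add S (fun i => g' i • f (c i)) hmS
    rw [hsum2] at h3
    exact eq_neg_of_add_eq_zero_right h3
  have hmem : f (c m) ∈ Submodule.span F
      (((S.erase m).image fun i => f (c i) : Finset (Fin d → F)) : Set (Fin d → F)) := by
    have h2 : f (c m) = (g' m)⁻¹ • (g' m • f (c m)) := by
      rw [smul_smul, inv_mul_cancel₀ hgm, one_smul]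
    rw [h2, herase]
    refine Submodule.smul_mem _ _ (Submodule.neg_mem _ (Submodule.sum_mem _ fun i hi =>
      Submodule.smul_mem _ _ (Submodule.subset_span ?_)))
    exact Finset.mem_coe.2 (Finset.mem_image_of_mem _ hi)
  refine keyP m (S.erase m) ?_ ?_ hmem
  · intro i hi
    have h1 : i ∈ S := Finset.mem_of_mem_erase hi
    have h2 := S.le_max' i h1
    have h3 := Finset.ne_of_mem_erase hi
    omega
  · have hSI : S.card ≤ I.card := Finset.card_le_card (Finset.filter_subset _ _)
    have h1 : (S.erase m).card = S.card - 1 := Finset.card_erase_of_mem hmS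
    have h4 : 1 ≤ S.card := Finset.card_pos.2 hSne
    omega
end

section
/- Let X be a set, F a field, d ≥ 2 an integer, and f : X → F^d. If f(X) is not contained in any finite union of proper linear subspaces of F^d, then C_f = {Z_{f,a} : a ∈ F^d, a ≠ 0} is maximal of VC-dimension d − 1: for every n ≥ d − 1, there exists an n-element subset Y ⊆ X with |{A ∩ Y : A ∈ C_f}| = Σ_{i=0}^{d-1} C(n, i). -/
open Finset Module Submodule


section aux
variable {X F : Type*} [Field F] {d : ℕ}

/-- The dot-product-with-`a` functional as a linear map. -/
noncomputable def stmt8.dotL (a : Fin d → F) : (Fin d → F) →ₗ[F] F :=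
  ∑ i, a i • LinearMap.proj i

lemma stmt8.dotL_apply (a v : Fin d → F) : stmt8.dotL a v = ∑ i, a i * v i := by
  simp [stmt8.dotL]

/-- A nonzero linear form cannot vanish on `d` linearly independent vectors. -/
lemma stmt8.ortho_zero (s : Finset (Fin d → F)) (hcard : s.card = d)
    (hli : LinearIndependent F ((↑) : (↑s : Set (Fin d → F)) → Fin d → F))
    (a : Fin d → F) (ha : ∀ v ∈ s, ∑ i, a i * v i = 0) : a = 0 := by
  have hspan : span F (s : Set (Fin d → F)) = ⊤ := by
    apply Submodule.eq_top_of_finrank_eq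
    have h1 : (s : Set (Fin d → F)).finrank F = s.card := finrank_span_finset_eq_card hli
    have h2 : finrank F (Fin d → F) = d := Module.finrank_fin_fun F
    rw [show finrank F ↥(span F (s : Set (Fin d → F))) = (s : Set (Fin d → F)).finrank F from rfl,
      h1, h2, hcard]
  have hker : span F (s : Set (Fin d → F)) ≤ LinearMap.ker (stmt8.dotL a) := by
    rw [Submodule.span_le]
    intro v hv
    simp only [SetLike.mem_coe, LinearMap.mem_ker, stmt8.dotL_apply]
    exact ha v hv
  rw [hspan, top_le_iff, LinearMap.ker_eq_top] at hker
  funext j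
  have := congrFun (congrArg (fun g => g.toFun) hker) (Pi.single j 1)
  simpa [stmt8.dotL_apply, Pi.single_apply, mul_ite] using this

/-- There is a nonzero form vanishing on fewer than `d` given vectors. -/
lemma stmt8.exists_ortho (f : X → Fin d → F) (u : Finset X) (hcard : u.card < d) :
    ∃ a : Fin d → F, a ≠ 0 ∧ ∀ c ∈ u, ∑ i, a i * f c i = 0 := by
  classical
  let L : (Fin d → F) →ₗ[F] ({ c // c ∈ u } → F) := LinearMap.pi (fun c => stmt8.dotL (f c.1))
  have hker : 0 < finrank F ↥(LinearMap.ker L) := by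
    have h1 := LinearMap.finrank_range_add_finrank_ker L
    have h2 : finrank F ↥(LinearMap.range L) ≤ u.card := by
      calc finrank F ↥(LinearMap.range L) ≤ finrank F ({ c // c ∈ u } → F) :=
            Submodule.finrank_le _
        _ = u.card := by simp [Module.finrank_pi]
    rw [Module.finrank_fin_fun] at h1
    omega
  obtain ⟨⟨a, haL⟩, ha0⟩ := Module.finrank_pos_iff_exists_ne_zero.mp hker
  refine ⟨a, ?_, ?_⟩
  · intro h; exact ha0 (Subtype.ext h)
  · intro c hc
    have : L a = 0 := haL
    have := congrFun this ⟨c, hc⟩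
    simp only [LinearMap.pi_apply, stmt8.dotL_apply, Pi.zero_apply, L] at this
    rw [← this]
    exact Finset.sum_congr rfl fun i _ => mul_comm _ _

end aux


section sel
variable {X F : Type*} [Field F] {d : ℕ}

/-- Selection of `N` points whose `f`-values are in general position. -/
lemma stmt8.select (hd : 2 ≤ d) (f : X → Fin d → F)
    (key : ∀ 𝒱 : Finset (Submodule F (Fin d → F)), (∀ W ∈ 𝒱, W ≠ ⊤) →
      ∃ x : X, ∀ W ∈ 𝒱, f x ∉ W) :
    ∀ N : ℕ, ∃ T : Finset X, T.card = N ∧ Set.InjOn f ↑T ∧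
      ∀ s : Finset (Fin d → F), ↑s ⊆ f '' ↑T → s.card ≤ d →
        LinearIndependent F ((↑) : (↑s : Set (Fin d → F)) → Fin d → F) := by
  classical
  intro N
  induction N with
  | zero =>
    refine ⟨∅, by simp, by simp [Set.InjOn], ?_⟩
    intro s hs _
    simp only [Finset.coe_empty, Set.image_empty, Set.subset_empty_iff,
      Finset.coe_eq_empty] at hs
    subst hs
    rw [Finset.coe_empty]
    exact linearIndependent_empty F (Fin d → F)
  | succ N ih =>
    obtain ⟨T, hTcard, hTinj, hTli⟩ := ih
    set 𝒮 : Finset (Finset (Fin d → F)) :=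
      (T.image f).powerset.filter (fun w => w.card ≤ d - 1) with h𝒮
    have hproper : ∀ W ∈ 𝒮.image (fun w : Finset (Fin d → F) => span F ((w : Set (Fin d → F)))), W ≠ ⊤ := by
      intro W hW
      obtain ⟨w, hw, rfl⟩ := Finset.mem_image.mp hW
      have hwc : w.card ≤ d - 1 := (Finset.mem_filter.mp hw).2
      intro htop
      have h1 : (↑w : Set (Fin d → F)).finrank F ≤ w.card := finrank_span_finset_le_card w
      have h2 : (↑w : Set (Fin d → F)).finrank F = d := by
        rw [show (↑w : Set (Fin d → F)).finrank F
            = finrank F ↥(span F (↑w : Set (Fin d → F))) from rfl, htop, finrank_top,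
          Module.finrank_fin_fun]
      omega
    obtain ⟨x₀, hx₀⟩ := key _ hproper
    have hx₀' : ∀ w ∈ 𝒮, f x₀ ∉ span F (↑w : Set (Fin d → F)) := fun w hw =>
      hx₀ _ (Finset.mem_image_of_mem _ hw)
    have hnotim : f x₀ ∉ T.image f := by
      intro h
      have hmem : ({f x₀} : Finset (Fin d → F)) ∈ 𝒮 := by
        rw [h𝒮, Finset.mem_filter, Finset.mem_powerset]
        exact ⟨Finset.singleton_subset_iff.mpr h, by simpa using by omega⟩
      exact hx₀' _ hmem (by simpa using Submodule.mem_span_singleton_self (f x₀))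
    have hne : ∀ t ∈ T, f t ≠ f x₀ := fun t ht h =>
      hnotim (h ▸ Finset.mem_image_of_mem f ht)
    have hx₀T : x₀ ∉ T := fun h => hnotim (Finset.mem_image_of_mem f h)
    refine ⟨insert x₀ T, by rw [Finset.card_insert_of_notMem hx₀T, hTcard], ?_, ?_⟩
    · -- InjOn
      intro p hp q hq hpq
      simp only [Finset.coe_insert, Set.mem_insert_iff, Finset.mem_coe] at hp hq
      rcases hp with rfl | hp
      · rcases hq with rfl | hq
        · rfl
        · exact absurd hpq.symm (hne q hq)
      · rcases hq with rfl | hq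
        · exact absurd hpq (hne p hp)
        · exact hTinj hp hq hpq
    · intro s hs hcard
      have himg : (f '' ↑(insert x₀ T) : Set (Fin d → F))
          = insert (f x₀) (f '' ↑T) := by
        rw [Finset.coe_insert, Set.image_insert_eq]
      rw [himg] at hs
      by_cases hmem : f x₀ ∈ s
      · set s' := s.erase (f x₀) with hs'def
        have hs'sub : (↑s' : Set (Fin d → F)) ⊆ f '' ↑T := by
          intro v hv
          have hvs : v ∈ s := Finset.mem_of_mem_erase (by exact_mod_cast hv)
          have hvne : v ≠ f x₀ := Finset.ne_of_mem_erase (by exact_mod_cast hv)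
          rcases hs hvs with h | h
          · exact absurd h hvne
          · exact h
        have hs'card : s'.card ≤ d - 1 := by
          have h1 : s'.card = s.card - 1 := Finset.card_erase_of_mem hmem
          have h2 : 1 ≤ s.card := Finset.card_pos.mpr ⟨_, hmem⟩
          omega
        have hs'mem : s' ∈ 𝒮 := by
          rw [h𝒮, Finset.mem_filter, Finset.mem_powerset]
          constructor
          · rw [← Finset.coe_subset, Finset.coe_image]
            exact hs'sub
          · exact hs'card
        have hli := hTli s' hs'sub (by omega)
        have hins := LinearIndepOn.id_insert hli (hx₀' s' hs'mem)
        have heq : (insert (f x₀) (↑s' : Set (Fin d → F))) = ↑s := by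
          rw [← Finset.coe_insert, Finset.insert_erase hmem]
        rwa [heq] at hins
      · have : (↑s : Set (Fin d → F)) ⊆ f '' ↑T := by
          intro v hv
          rcases hs hv with h | h
          · exact absurd (h ▸ hv) (by exact_mod_cast hmem)
          · exact h
        exact hTli s this hcard

end sel

/-- The set of traces of members of `C` on `Y`. -/
def traces {X : Type*} (C : Set (Set X)) (Y : Set X) : Set (Set X) :=
  (fun A => A ∩ Y) '' C

/-- If the image of `f : X → F^d` (`d ≥ 2`) is not contained in any finite
union of proper linear subspaces of `F^d`, then `C_f` is maximal of VC-dimension `d - 1`: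
for every `n ≥ d - 1` there is an `n`-element subset of `X` on which `C_f` has exactly
`∑_{i=0}^{d-1} (n choose i)` traces. -/
theorem statement8 {X F : Type*} [Field F] {d : ℕ} (hd : 2 ≤ d) (f : X → Fin d → F)
    (hcov : ¬ ∃ (k : ℕ) (V : Fin k → Submodule F (Fin d → F)),
      (∀ i, V i ≠ ⊤) ∧ ∀ x : X, ∃ i, f x ∈ V i) :
    ∀ n : ℕ, d - 1 ≤ n → ∃ Y : Finset X, Y.card = n ∧
      (traces (zeroSets f) ↑Y).ncard = ∑ i ∈ Finset.range d, n.choose i := by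
  classical
  intro n hn
  push_neg at hcov
  have key : ∀ 𝒱 : Finset (Submodule F (Fin d → F)), (∀ W ∈ 𝒱, W ≠ ⊤) →
      ∃ x : X, ∀ W ∈ 𝒱, f x ∉ W := by
    intro 𝒱 h𝒱
    obtain ⟨x, hx⟩ := hcov 𝒱.card
      (fun i => ((𝒱.equivFin.symm i : { W // W ∈ 𝒱 }) : Submodule F (Fin d → F)))
      (fun i => h𝒱 _ (𝒱.equivFin.symm i).2)
    refine ⟨x, fun W hW => ?_⟩
    have := hx (𝒱.equivFin ⟨W, hW⟩)
    simpa using this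
  obtain ⟨T, hTcard, hTinj, hTli⟩ := stmt8.select hd f key (n + (d - 1))
  obtain ⟨Y, hYT, hYcard⟩ := Finset.exists_subset_card_eq
    (show n ≤ T.card by omega)
  refine ⟨Y, hYcard, ?_⟩
  -- any nonzero form vanishes on at most d-1 points of T
  have hzero : ∀ u : Finset X, u ⊆ T → d ≤ u.card →
      ∀ a : Fin d → F, (∀ c ∈ u, ∑ i, a i * f c i = 0) → a = 0 := by
    intro u hu hcard a ha
    obtain ⟨u', hu'u, hu'card⟩ := Finset.exists_subset_card_eq hcard
    have hinj : Set.InjOn f ↑u' := hTinj.mono (by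
      intro c hc; exact hu (hu'u hc))
    have hicard : (u'.image f).card = d := by
      rw [Finset.card_image_of_injOn hinj, hu'card]
    apply stmt8.ortho_zero (u'.image f) hicard
    · apply hTli
      · rw [Finset.coe_image]
        exact Set.image_mono (f := f) (by intro c hc; exact hu (hu'u hc))
      · omega
    · intro v hv
      obtain ⟨c, hc, rfl⟩ := Finset.mem_image.mp hv
      exact ha c (hu'u hc)
  set 𝒯 : Finset (Finset X) := Y.powerset.filter (fun t => t.card ≤ d - 1) with h𝒯
  have htrace : traces (zeroSets f) ↑Y = ((↑) : Finset X → Set X) '' ↑𝒯 := by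
    ext A
    constructor
    · rintro ⟨B, ⟨a, ha0, rfl⟩, rfl⟩
      set t₀ : Finset X := Y.filter (fun c => ∑ i, a i * f c i = 0) with ht₀
      refine ⟨t₀, ?_, ?_⟩
      · rw [Finset.mem_coe, h𝒯, Finset.mem_filter, Finset.mem_powerset]
        refine ⟨Finset.filter_subset _ _, ?_⟩
        by_contra h
        push_neg at h
        have hdle : d ≤ t₀.card := by omega
        refine ha0 (hzero t₀ ((Finset.filter_subset _ _).trans hYT) hdle a ?_)
        intro c hc
        exact (Finset.mem_filter.mp hc).2
      · ext c
        simp only [ht₀, Finset.coe_filter, Set.mem_setOf_eq, Set.mem_inter_iff, zeroSet,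
          Finset.mem_coe]
        tauto
    · rintro ⟨t, ht, rfl⟩
      rw [Finset.mem_coe, h𝒯, Finset.mem_filter, Finset.mem_powerset] at ht
      obtain ⟨htY, htc⟩ := ht
      have hdisj : Disjoint t (T \ Y) := by
        rw [Finset.disjoint_left]
        intro c hc hc'
        exact (Finset.mem_sdiff.mp hc').2 (htY hc)
      have hcardsd : (T \ Y).card = d - 1 := by
        rw [Finset.card_sdiff_of_subset hYT, hTcard, hYcard]; omega
      have hcardU : (t ∪ (T \ Y)).card = t.card + (d - 1) := by
        rw [Finset.card_union_of_disjoint hdisj, hcardsd]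
      obtain ⟨u, htu, huU, hucard⟩ := Finset.exists_subsuperset_card_eq (s := t)
        (t := t ∪ (T \ Y)) (n := d - 1) Finset.subset_union_left (by omega) (by omega)
      have hucard' : u.card = d - 1 := by omega
      have huT : u ⊆ T := by
        intro c hc
        rcases Finset.mem_union.mp (huU hc) with h | h
        · exact hYT (htY h)
        · exact (Finset.mem_sdiff.mp h).1
      obtain ⟨a, ha0, ha⟩ := stmt8.exists_ortho f u (by omega)
      refine ⟨zeroSet f a, ⟨a, ha0, rfl⟩, ?_⟩
      ext c
      simp only [Set.mem_inter_iff, zeroSet, Set.mem_setOf_eq, Finset.mem_coe]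
      constructor
      · rintro ⟨hc0, hcY⟩
        by_contra hct
        have hcu : c ∉ u := by
          intro h
          rcases Finset.mem_union.mp (huU h) with h' | h'
          · exact hct h'
          · exact (Finset.mem_sdiff.mp h').2 hcY
        refine ha0 (hzero (insert c u) ?_ ?_ a ?_)
        · exact Finset.insert_subset (hYT hcY) huT
        · rw [Finset.card_insert_of_notMem hcu]; omega
        · intro c' hc'
          rcases Finset.mem_insert.mp hc' with rfl | h
          · exact hc0
          · exact ha c' h
      · intro hct
        exact ⟨ha c (htu hct), htY hct⟩
  rw [htrace, Set.ncard_image_of_injective _ Finset.coe_injective, Set.ncard_coe_finset]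
  have h𝒯eq : 𝒯 = (Finset.range d).biUnion (fun i => Y.powersetCard i) := by
    ext t
    simp only [h𝒯, Finset.mem_filter, Finset.mem_powerset, Finset.mem_biUnion,
      Finset.mem_range, Finset.mem_powersetCard]
    constructor
    · rintro ⟨h1, h2⟩
      exact ⟨t.card, by omega, h1, rfl⟩
    · rintro ⟨i, hi, h1, rfl⟩
      exact ⟨h1, by omega⟩
  rw [h𝒯eq, Finset.card_biUnion]
  · exact Finset.sum_congr rfl fun i _ => by rw [Finset.card_powersetCard, hYcard]
  · intro i _ j _ hij
    rw [Function.onFun, Finset.disjoint_left]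
    intro t h1 h2
    rw [Finset.mem_powersetCard] at h1 h2
    exact hij (h1.2 ▸ h2.2)
end

section
/- Let X be a set, F a field, d ≥ 2 an integer, and f : X → F^d. If f(X) is not contained in any finite union of proper linear subspaces of F^d, then C_f = {Z_{f,a} : a ∈ F^d, a ≠ 0} is maximal of Littlestone dimension d − 1: for every n ≥ d − 1, there exists an (X, C_f)-labeled tree of depth n having exactly Σ_{i=0}^{d-1} C(n, i) well-labeled leaves. -/
open Submodule

/-- A vector space over an infinite field is not the union of finitely many proper
subspaces. -/
theorem SardStmt10.myUnion {F M : Type*} [Field F] [Infinite F] [AddCommGroup M] [Module F M]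
    {ι : Type*} [Finite ι] (V : ι → Submodule F M) (h : ∀ i, V i ≠ ⊤) :
    ∃ a : M, ∀ i, a ∉ V i := by
  have key : ∀ (k : ℕ) (W : Fin k → Submodule F M), (∀ i, W i ≠ ⊤) → ∃ a : M, ∀ i, a ∉ W i := by
    intro k
    induction k with
    | zero => exact fun W _ => ⟨0, fun i => i.elim0⟩
    | succ k ih =>
      intro W hW
      obtain ⟨x, hx⟩ := ih (fun j => W j.castSucc) (fun j => hW _)
      by_cases hxl : x ∉ W (Fin.last k)
      · refine ⟨x, fun i => ?_⟩
        rcases Fin.eq_castSucc_or_eq_last i with ⟨j, rfl⟩ | rfl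
        · exact hx j
        · exact hxl
      push_neg at hxl
      have hy : ∃ y : M, y ∉ W (Fin.last k) := by
        by_contra hy; push_neg at hy
        exact hW (Fin.last k) (eq_top_iff'.2 hy)
      obtain ⟨y, hy⟩ := hy
      by_cases hall : ∀ c : F, ∃ i, x + c • y ∈ W i
      · choose g hg using hall
        obtain ⟨c, c', hne, hcc⟩ := Finite.exists_ne_map_eq_of_infinite g
        have hyW : y ∈ W (g c) := by
          have h1 := hg c
          have h2 := hg c'; rw [← hcc] at h2
          have : (c - c') • y ∈ W (g c) := by
            have := (W (g c)).sub_mem h1 h2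
            simpa [sub_smul] using this
          have := (W (g c)).smul_mem (c - c')⁻¹ this
          rwa [smul_smul, inv_mul_cancel₀ (sub_ne_zero.2 hne), one_smul] at this
        have hxW : x ∈ W (g c) := by
          have h1 := hg c
          have := (W (g c)).sub_mem h1 ((W (g c)).smul_mem c hyW)
          simpa using this
        rcases Fin.eq_castSucc_or_eq_last (g c) with ⟨j, hj⟩ | hj
        · exact absurd hxW (hj ▸ hx j)
        · exact absurd hyW (hj ▸ hy)
      · push_neg at hall
        obtain ⟨c, hc⟩ := hall
        exact ⟨x + c • y, hc⟩
  cases nonempty_fintype ι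
  obtain ⟨a, ha⟩ := key (Fintype.card ι) (V ∘ (Fintype.equivFin ι).symm)
    (fun i => h _)
  exact ⟨a, fun i => by simpa using ha ((Fintype.equivFin ι) i)⟩

namespace SardStmt10

section
variable {X F : Type*} [Field F] {d : ℕ}

theorem spanProper (hd : 2 ≤ d) (s : Finset (Fin d → F)) (hs : s.card < d) :
    span F (↑s : Set (Fin d → F)) ≠ ⊤ := by
  intro h
  have h1 : Set.finrank F (↑s : Set (Fin d → F)) ≤ s.card := finrank_span_finset_le_card s
  rw [Set.finrank, h, finrank_top, Module.finrank_fin_fun] at h1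
  omega

theorem avoid (hd : 2 ≤ d) (f : X → Fin d → F)
    (hcov : ¬ ∃ (k : ℕ) (V : Fin k → Submodule F (Fin d → F)),
      (∀ i, V i ≠ ⊤) ∧ ∀ x : X, ∃ i, f x ∈ V i)
    {ι : Type} [Finite ι] (V : ι → Submodule F (Fin d → F)) (h : ∀ i, V i ≠ ⊤) :
    ∃ x : X, ∀ i, f x ∉ V i := by
  by_contra hx
  push_neg at hx
  cases nonempty_fintype ι
  refine hcov ⟨Fintype.card ι, V ∘ (Fintype.equivFin ι).symm, fun i => h _, fun x => ?_⟩
  obtain ⟨i, hi⟩ := hx x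
  exact ⟨Fintype.equivFin ι i, by simpa using hi⟩

theorem haveNontriv (hd : 2 ≤ d) : Nontrivial (Fin d → F) := by
  haveI : NeZero d := ⟨by omega⟩
  infer_instance

theorem step (hd : 2 ≤ d) (f : X → Fin d → F)
    (hcov : ¬ ∃ (k : ℕ) (V : Fin k → Submodule F (Fin d → F)),
      (∀ i, V i ≠ ⊤) ∧ ∀ x : X, ∃ i, f x ∈ V i)
    (m : ℕ) (prev : (k : ℕ) → k < m → X) :
    ∃ x : X, ∀ T : Finset (Fin m), T.card < d →
      f x ∉ span F ((fun i : Fin m => f (prev i.1 i.2)) '' ↑T) := by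
  haveI := haveNontriv (F := F) hd
  classical
  obtain ⟨x, hx⟩ := avoid hd f hcov
    (fun T : Finset (Fin m) =>
      if T.card < d then span F ((fun i : Fin m => f (prev i.1 i.2)) '' ↑T) else ⊥)
    (by
      intro T
      by_cases h : T.card < d
      · simp only [if_pos h]
        rw [← Finset.coe_image]
        exact spanProper hd _ ((Finset.card_image_le).trans_lt h)
      · simp only [if_neg h]
        exact bot_ne_top)
  refine ⟨x, fun T hT => ?_⟩
  have := hx T
  rwa [if_pos hT] at this

noncomputable def seq (hd : 2 ≤ d) (f : X → Fin d → F)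
    (hcov : ¬ ∃ (k : ℕ) (V : Fin k → Submodule F (Fin d → F)),
      (∀ i, V i ≠ ⊤) ∧ ∀ x : X, ∃ i, f x ∈ V i) : ℕ → X
  | m => Classical.choose (step hd f hcov m (fun k _ => seq hd f hcov k))

theorem seq_spec (hd : 2 ≤ d) (f : X → Fin d → F)
    (hcov : ¬ ∃ (k : ℕ) (V : Fin k → Submodule F (Fin d → F)),
      (∀ i, V i ≠ ⊤) ∧ ∀ x : X, ∃ i, f x ∈ V i)
    (m : ℕ) (T : Finset (Fin m)) (hT : T.card < d) :
    f (seq hd f hcov m) ∉ span F ((fun i : Fin m => f (seq hd f hcov i.1)) '' ↑T) := by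
  rw [seq]
  exact Classical.choose_spec (step hd f hcov m (fun k _ => seq hd f hcov k)) T hT

theorem seq_spec' (hd : 2 ≤ d) (f : X → Fin d → F)
    (hcov : ¬ ∃ (k : ℕ) (V : Fin k → Submodule F (Fin d → F)),
      (∀ i, V i ≠ ⊤) ∧ ∀ x : X, ∃ i, f x ∈ V i)
    (m : ℕ) (T : Finset ℕ) (hb : ∀ i ∈ T, i < m) (hT : T.card < d) :
    f (seq hd f hcov m) ∉ span F ((fun i : ℕ => f (seq hd f hcov i)) '' ↑T) := by
  have h := seq_spec hd f hcov m (T.attachFin hb) (by rwa [Finset.card_attachFin])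
  convert h using 3
  ext y
  simp only [Set.mem_image, Finset.mem_coe, Finset.mem_attachFin]
  constructor
  · rintro ⟨i, hi, rfl⟩
    exact ⟨⟨i, hb i hi⟩, hi, rfl⟩
  · rintro ⟨i, hi, rfl⟩
    exact ⟨i.1, hi, rfl⟩

theorem gp (hd : 2 ≤ d) (f : X → Fin d → F)
    (hcov : ¬ ∃ (k : ℕ) (V : Fin k → Submodule F (Fin d → F)),
      (∀ i, V i ≠ ⊤) ∧ ∀ x : X, ∃ i, f x ∈ V i) :
    ∀ (N : ℕ) (T : Finset ℕ), T.card ≤ N → T.card < d → ∀ j ∉ T,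
    f (seq hd f hcov j) ∉ span F ((fun i : ℕ => f (seq hd f hcov i)) '' ↑T) := by
  intro N
  induction N with
  | zero =>
    intro T hN _ j hj
    rw [show T = ∅ from Finset.card_eq_zero.mp (Nat.le_zero.mp hN)]
    simpa using seq_spec' hd f hcov j ∅ (by simp) (by simp only [Finset.card_empty]; omega)
  | succ N ih =>
    intro T hN hTd j hj
    by_cases hball : ∀ i ∈ T, i < j
    · exact seq_spec' hd f hcov j T hball hTd
    · push_neg at hball
      rcases T.eq_empty_or_nonempty with rfl | hTne
      · simpa using seq_spec' hd f hcov j ∅ (by simp) (by simp only [Finset.card_empty]; omega)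
      set m := T.max' hTne with hm
      have hmT : m ∈ T := T.max'_mem hTne
      have hjm : j < m := by
        obtain ⟨i, hiT, hij⟩ := hball
        have : i ≤ m := T.le_max' i hiT
        have : j ≠ m := fun h => hj (h ▸ hmT)
        omega
      intro hmem
      have hTins : T = insert m (T.erase m) := (Finset.insert_erase hmT).symm
      have hsub : ((fun i : ℕ => f (seq hd f hcov i)) '' ↑T)
          = insert (f (seq hd f hcov m))
            ((fun i : ℕ => f (seq hd f hcov i)) '' ↑(T.erase m)) := by
        conv_lhs => rw [hTins, Finset.coe_insert, Set.image_insert_eq]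
      rw [hsub] at hmem
      rw [mem_span_insert] at hmem
      obtain ⟨c, z, hz, hzeq⟩ := hmem
      have hmnot : f (seq hd f hcov m) ∉
          span F ((fun i : ℕ => f (seq hd f hcov i)) '' ↑(insert j (T.erase m))) := by
        apply seq_spec' hd f hcov m
        · intro i hi
          rcases Finset.mem_insert.mp hi with rfl | hi
          · exact hjm
          · have h2 := Finset.mem_erase.mp hi
            have : i ≤ m := T.le_max' i h2.2
            omega
        · rw [Finset.card_insert_of_notMem (fun h => hj (Finset.mem_of_mem_erase h))]
          rw [Finset.card_erase_of_mem hmT]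
          have : 1 ≤ T.card := Finset.card_pos.mpr hTne
          omega
      have himg : ((fun i : ℕ => f (seq hd f hcov i)) '' ↑(insert j (T.erase m)))
          = insert (f (seq hd f hcov j))
            ((fun i : ℕ => f (seq hd f hcov i)) '' ↑(T.erase m)) := by
        rw [Finset.coe_insert, Set.image_insert_eq]
      rw [himg] at hmnot
      by_cases hc : c = 0
      · subst hc
        rw [zero_smul, zero_add] at hzeq
        refine ih (T.erase m) ?_ ?_ j (fun h => hj (Finset.mem_of_mem_erase h)) ?_
        · rw [Finset.card_erase_of_mem hmT]; omega
        · rw [Finset.card_erase_of_mem hmT]; omega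
        · rw [hzeq]; exact hz
      · apply hmnot
        have hjmem : f (seq hd f hcov j) ∈
            span F (insert (f (seq hd f hcov j))
              ((fun i : ℕ => f (seq hd f hcov i)) '' ↑(T.erase m))) :=
          subset_span (Set.mem_insert _ _)
        have hzmem : z ∈ span F (insert (f (seq hd f hcov j))
              ((fun i : ℕ => f (seq hd f hcov i)) '' ↑(T.erase m))) :=
          span_mono (Set.subset_insert _ _) hz
        have heq : c • f (seq hd f hcov m) = f (seq hd f hcov j) - z := by
          rw [hzeq]; abel
        have hmmem := Submodule.smul_mem _ c⁻¹
          (Submodule.sub_mem _ hjmem hzmem)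
        rw [← heq, smul_smul, inv_mul_cancel₀ hc, one_smul] at hmmem
        exact hmmem

theorem infiniteF (hd : 2 ≤ d) (f : X → Fin d → F)
    (hcov : ¬ ∃ (k : ℕ) (V : Fin k → Submodule F (Fin d → F)),
      (∀ i, V i ≠ ⊤) ∧ ∀ x : X, ∃ i, f x ∈ V i) : Infinite F := by
  by_contra hF
  haveI : Finite F := not_infinite_iff_finite.mp hF
  haveI : Fintype (Fin d → F) := Fintype.ofFinite _
  refine hcov ⟨Fintype.card (Fin d → F),
    fun i => span F {(Fintype.equivFin (Fin d → F)).symm i}, fun i h => ?_, fun x => ?_⟩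
  · simp only at h
    set v := (Fintype.equivFin (Fin d → F)).symm i
    have h1 : Module.finrank F (span F ({v} : Set (Fin d → F))) ≤ 1 := by
      have := finrank_span_finset_le_card (R := F) ({v} : Finset (Fin d → F))
      rw [Finset.coe_singleton, Finset.card_singleton] at this
      exact this
    rw [h, finrank_top, Module.finrank_fin_fun] at h1
    omega
  · refine ⟨Fintype.equivFin (Fin d → F) (f x), ?_⟩
    simp only [Equiv.symm_apply_apply]
    exact subset_span rfl

theorem dotFormula (φ : Module.Dual F (Fin d → F)) (u : Fin d → F) :
    ∑ i, φ (Pi.single i 1) * u i = φ u := by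
  conv_rhs => rw [← Finset.univ_sum_single u]
  rw [map_sum]
  refine Finset.sum_congr rfl fun i _ => ?_
  have h : Pi.single i (u i) = u i • (Pi.single i (1 : F) : Fin d → F) := by
    rw [← Pi.single_smul, smul_eq_mul, mul_one]
  rw [h, map_smul, smul_eq_mul, mul_comm]

theorem existsA [Infinite F] (W : Submodule F (Fin d → F)) (hW : W ≠ ⊤)
    {ι : Type*} [Finite ι] (w : ι → Fin d → F) (hw : ∀ j, w j ∉ W) :
    ∃ a : Fin d → F, a ≠ 0 ∧ (∀ u ∈ W, ∑ i, a i * u i = 0) ∧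
      ∀ j, ∑ i, a i * w j i ≠ 0 := by
  classical
  set Q := (Fin d → F) ⧸ W
  obtain ⟨u0, hu0⟩ : ∃ u0, u0 ∉ W := by
    by_contra h; push_neg at h; exact hW (eq_top_iff'.2 h)
  have hmk0 : W.mkQ u0 ≠ 0 := by
    rw [Ne, W.mkQ_apply, Submodule.Quotient.mk_eq_zero]; exact hu0
  obtain ⟨φ0, hφ0⟩ : ∃ φ0 : Module.Dual F Q, φ0 (W.mkQ u0) ≠ 0 := by
    by_contra h; push_neg at h
    exact hmk0 ((Module.forall_dual_apply_eq_zero_iff F _).mp h)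
  haveI : Nontrivial (Module.Dual F Q) :=
    nontrivial_of_ne φ0 0 (fun h => hφ0 (by simp [h]))
  set K : Option ι → Submodule F (Module.Dual F Q) := fun o =>
    match o with
    | none => ⊥
    | some j => LinearMap.ker (Module.Dual.eval F Q (W.mkQ (w j)))
  have hK : ∀ o, K o ≠ ⊤ := by
    rintro (_ | j)
    · exact bot_ne_top
    · intro h
      have hmk : W.mkQ (w j) ≠ 0 := by
        rw [Ne, W.mkQ_apply, Submodule.Quotient.mk_eq_zero]; exact hw j
      apply hmk
      rw [← Module.forall_dual_apply_eq_zero_iff F (W.mkQ (w j))]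
      intro φ
      have : φ ∈ K (some j) := h ▸ Submodule.mem_top
      simpa [K, LinearMap.mem_ker] using this
  haveI : Fintype ι := Fintype.ofFinite ι
  haveI : Finite (Option ι) := inferInstance
  obtain ⟨ψ, hψ⟩ := SardStmt10.myUnion K hK
  have hψ0 : ψ ≠ 0 := by simpa [K] using hψ none
  have hψj : ∀ j, ψ (W.mkQ (w j)) ≠ 0 := by
    intro j
    have := hψ (some j)
    simpa [K, LinearMap.mem_ker] using this
  set φ : Module.Dual F (Fin d → F) := ψ.comp W.mkQ with hφdef
  refine ⟨fun i => φ (Pi.single i 1), ?_, ?_, ?_⟩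
  · intro h
    apply hψ0
    refine LinearMap.ext fun q => ?_
    obtain ⟨u, rfl⟩ := W.mkQ_surjective q
    have h2 : φ u = 0 := by
      rw [← dotFormula]
      refine Finset.sum_eq_zero fun i _ => ?_
      have := congrFun h i
      simp only [Pi.zero_apply] at this
      rw [this, zero_mul]
    rw [LinearMap.zero_apply]; exact h2
  · intro u hu
    rw [dotFormula]
    have h0 : W.mkQ u = 0 := by rw [W.mkQ_apply, Submodule.Quotient.mk_eq_zero]; exact hu
    simp [φ, h0]
  · intro j
    rw [dotFormula]
    exact hψj j

end

theorem countLem (n d : ℕ) :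
    Nat.card {τ : Fin n → Bool // (Finset.univ.filter (fun k => τ k = true)).card < d}
      = ∑ i ∈ Finset.range d, n.choose i := by
  classical
  rw [Nat.card_eq_fintype_card, Fintype.card_subtype]
  have hbij : (Finset.univ.filter
        (fun τ : Fin n → Bool => (Finset.univ.filter (fun k => τ k = true)).card < d)).card
      = (Finset.univ.filter (fun s : Finset (Fin n) => s.card < d)).card := by
    refine Finset.card_bij (fun τ _ => Finset.univ.filter (fun k => τ k = true)) ?_ ?_ ?_
    · intro τ hτ
      simp only [Finset.mem_filter, Finset.mem_univ, true_and] at hτ ⊢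
      exact hτ
    · intro τ hτ τ' hτ' h
      funext k
      have := Finset.ext_iff.mp h k
      simp only [Finset.mem_filter, Finset.mem_univ, true_and] at this
      cases hk : τ k <;> cases hk' : τ' k <;> simp_all
    · intro s hs
      simp only [Finset.mem_filter, Finset.mem_univ, true_and] at hs
      have hset : (Finset.univ.filter fun k : Fin n => decide (k ∈ s) = true) = s := by
        ext k; simp
      refine ⟨fun k => decide (k ∈ s), ?_, hset⟩
      simp only [Finset.mem_filter, Finset.mem_univ, true_and]
      rw [hset]; exact hs
  rw [hbij]
  have hpart : (Finset.univ.filter (fun s : Finset (Fin n) => s.card < d))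
      = (Finset.range d).biUnion (fun i => Finset.univ.powersetCard i) := by
    ext s
    simp [Finset.mem_powersetCard_univ, Finset.mem_biUnion, Finset.mem_range]
  rw [hpart, Finset.card_biUnion]
  · refine Finset.sum_congr rfl fun i _ => ?_
    rw [Finset.card_powersetCard, Finset.card_univ, Fintype.card_fin]
  · intro i _ j _ hij
    simp only [Finset.disjoint_left, Finset.mem_powersetCard_univ]
    intro s h1 h2
    exact hij (h1 ▸ h2 ▸ rfl)

end SardStmt10

/-- If the image of `f : X → F^d` (`d ≥ 2`) is not contained in any finite
union of proper linear subspaces of `F^d`, then `C_f` is maximal of Littlestone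
dimension `d - 1`: for every `n ≥ d - 1` there is an `(X, C_f)`-labeled tree of depth `n`
with exactly `∑_{i=0}^{d-1} (n choose i)` well-labeled leaves. -/
theorem statement10 {X F : Type*} [Field F] {d : ℕ} (hd : 2 ≤ d) (f : X → Fin d → F)
    (hcov : ¬ ∃ (k : ℕ) (V : Fin k → Submodule F (Fin d → F)),
      (∀ i, V i ≠ ⊤) ∧ ∀ x : X, ∃ i, f x ∈ V i) :
    ∀ n : ℕ, d - 1 ≤ n →
      ∃ (t : (k : ℕ) → (Fin k → Bool) → X) (L : (Fin n → Bool) → Set X),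
        (∀ τ, L τ ∈ zeroSets f) ∧
        Nat.card {τ : Fin n → Bool // WellLabeledLeaf n t (L τ) τ} =
          ∑ i ∈ Finset.range d, n.choose i := by
  classical
  haveI : Infinite F := SardStmt10.infiniteF hd f hcov
  intro n hn
  have claim : ∀ τ : Fin n → Bool, ∃ a : Fin d → F, a ≠ 0 ∧
      (WellLabeledLeaf n (fun k _ => SardStmt10.seq hd f hcov k) (zeroSet f a) τ ↔
        (Finset.univ.filter (fun k => τ k = true)).card < d) := by
    intro τ
    by_cases hτ : (Finset.univ.filter (fun k => τ k = true)).card < d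
    · -- good leaf
      set S : Finset ℕ := (Finset.univ.filter (fun k => τ k = true)).image Fin.val with hS
      have hScard : S.card < d := by
        rw [hS, Finset.card_image_of_injective _ Fin.val_injective]; exact hτ
      have hWne : span F ((fun i : ℕ => f (SardStmt10.seq hd f hcov i)) '' ↑S) ≠ ⊤ := by
        rw [← Finset.coe_image]
        exact SardStmt10.spanProper hd _ ((Finset.card_image_le).trans_lt hScard)
      obtain ⟨a, ha0, haW, haj⟩ := SardStmt10.existsA
        (span F ((fun i : ℕ => f (SardStmt10.seq hd f hcov i)) '' ↑S)) hWne
        (ι := {j : Fin n // τ j = false})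
        (fun j => f (SardStmt10.seq hd f hcov j.1.1))
        (by
          intro j
          apply SardStmt10.gp hd f hcov S.card S le_rfl hScard j.1.1
          intro hmem
          rw [hS, Finset.mem_image] at hmem
          obtain ⟨k, hk, hkval⟩ := hmem
          have hkj : k = j.1 := Fin.val_injective hkval
          have := (Finset.mem_filter.mp hk).2
          rw [hkj, j.2] at this
          exact Bool.false_ne_true this)
      refine ⟨a, ha0, iff_of_true ?_ hτ⟩
      intro k
      simp only [zeroSet, Set.mem_setOf_eq]
      cases hk : τ k with
      | false =>
        simp only [Bool.false_eq_true, iff_false]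
        exact haj ⟨k, hk⟩
      | true =>
        simp only [iff_true]
        apply haW
        apply subset_span
        exact ⟨k.1, by
          rw [hS, Finset.coe_image]
          exact Set.mem_image_of_mem _ (by simp [hk]), rfl⟩
    · -- bad leaf
      have hpos : 0 < (Finset.univ.filter (fun k => τ k = true)).card := by omega
      obtain ⟨k₀, hk₀⟩ := Finset.card_pos.mp hpos
      have hτk₀ : τ k₀ = true := (Finset.mem_filter.mp hk₀).2
      have hv0 : f (SardStmt10.seq hd f hcov k₀.1) ≠ 0 := by
        have h := SardStmt10.gp hd f hcov 0 ∅ le_rfl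
          (by simp only [Finset.card_empty]; omega) k₀.1 (Finset.notMem_empty _)
        intro h0
        apply h
        simp only [Finset.coe_empty, Set.image_empty, span_empty]
        rw [h0]; exact Submodule.zero_mem ⊥
      obtain ⟨i₀, hi₀⟩ : ∃ i₀, f (SardStmt10.seq hd f hcov k₀.1) i₀ ≠ 0 := by
        by_contra h; push_neg at h
        exact hv0 (funext h)
      refine ⟨Pi.single i₀ 1, ?_, iff_of_false ?_ hτ⟩
      · intro h
        have := congrFun h i₀
        simp at this
      · intro hWLL
        have h := (hWLL k₀).mpr hτk₀
        simp only [zeroSet, Set.mem_setOf_eq] at h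
        apply hi₀
        rw [← h]
        rw [Finset.sum_eq_single i₀]
        · simp
        · intro b _ hb
          simp [Pi.single_apply, hb.symm]
        · simp
  choose a ha0 haiff using claim
  refine ⟨fun k _ => SardStmt10.seq hd f hcov k, fun τ => zeroSet f (a τ),
    fun τ => ⟨a τ, ha0 τ, rfl⟩, ?_⟩
  have : Nat.card {τ : Fin n → Bool //
      WellLabeledLeaf n (fun k _ => SardStmt10.seq hd f hcov k) (zeroSet f (a τ)) τ}
      = Nat.card {τ : Fin n → Bool //
        (Finset.univ.filter (fun k => τ k = true)).card < d} :=
    Nat.card_congr (Equiv.subtypeEquivRight fun τ => haiff τ)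
  rw [this, SardStmt10.countLem n d]
end

section
/- Let X be a set, F a field, d ≥ 2 an integer, and f : X → F^d. If f(X) is contained in a finite union of proper linear subspaces of F^d, then C_f = {Z_{f,a} : a ∈ F^d, a ≠ 0} is not maximal of VC-dimension d − 1: there exists n ≥ d − 1 such that every n-element subset Y ⊆ X satisfies |{A ∩ Y : A ∈ C_f}| < Σ_{i=0}^{d-1} C(n, i). Concretely, if f(X) is contained in the union of k proper subspaces and n = k(d−1)+1 with |X| ≥ n, every n-element subset Y satisfies this strict inequality. -/
open Finset

section aux

variable {X F : Type*} [Field F] [LinearOrder X] {d : ℕ} (f : X → Fin d → F)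

open Classical in
/-- greedy basis of a finset w.r.t. the vectors `f`. -/
noncomputable def greedyB (J : Finset X) : Finset X :=
  J.filter fun j => f j ∉ Submodule.span F (f '' {i | i ∈ J ∧ i < j})

lemma mem_greedyB {J : Finset X} {j : X} :
    j ∈ greedyB f J ↔ j ∈ J ∧ f j ∉ Submodule.span F (f '' {i | i ∈ J ∧ i < j}) := by
  simp [greedyB]

lemma greedyB_subset (J : Finset X) : greedyB f J ⊆ J := by
  classical exact filter_subset _ _

/-- every vector of `J` lies in the span of the greedy basis vectors. -/
lemma mem_span_greedyB (J : Finset X) : ∀ j ∈ J, f j ∈ Submodule.span F (f '' ↑(greedyB f J)) := by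
  classical
  by_contra h
  push_neg at h
  obtain ⟨j, hjJ, hj⟩ := h
  set bad := J.filter (fun j => f j ∉ Submodule.span F (f '' ↑(greedyB f J))) with hbad
  have hbne : bad.Nonempty := ⟨j, by simp [hbad, hjJ, hj]⟩
  set j₀ := bad.min' hbne with hj₀
  have hj₀bad : j₀ ∈ bad := bad.min'_mem hbne
  have hj₀J : j₀ ∈ J := (mem_filter.1 hj₀bad).1
  have hj₀n : f j₀ ∉ Submodule.span F (f '' ↑(greedyB f J)) := (mem_filter.1 hj₀bad).2
  have hj₀g : j₀ ∉ greedyB f J := fun hg =>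
    hj₀n (Submodule.subset_span (Set.mem_image_of_mem f (by exact_mod_cast hg)))
  have hj₀sp : f j₀ ∈ Submodule.span F (f '' {i | i ∈ J ∧ i < j₀}) := by
    by_contra hc
    exact hj₀g ((mem_greedyB f).2 ⟨hj₀J, hc⟩)
  apply hj₀n
  refine Submodule.span_le.2 ?_ hj₀sp
  rintro _ ⟨i, ⟨hiJ, hilt⟩, rfl⟩
  by_contra hni
  have : i ∈ bad := mem_filter.2 ⟨hiJ, hni⟩
  exact absurd hilt (not_lt.2 (bad.min'_le i this))

/-- greedy-type condition forces the cardinality to be at most the rank of the span. -/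
lemma card_le_finrank_span (T : Finset X)
    (hT : ∀ j ∈ T, f j ∉ Submodule.span F (f '' {i | i ∈ T ∧ i < j})) :
    T.card ≤ Module.finrank F (Submodule.span F (f '' (T : Set X))) := by
  classical
  induction T using Finset.strongInduction with
  | _ T ih =>
    rcases T.eq_empty_or_nonempty with rfl | hne
    · simp
    · set m := T.max' hne with hm
      have hmT : m ∈ T := T.max'_mem hne
      set T' := T.erase m with hT'
      have hsub : (T' : Set X) ⊆ {i | i ∈ T ∧ i < m} := by
        intro i hi
        simp only [hT', coe_erase, Set.mem_diff, mem_coe, Set.mem_singleton_iff] at hi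
        exact ⟨hi.1, lt_of_le_of_ne (T.le_max' i hi.1) hi.2⟩
      have hmn : f m ∉ Submodule.span F (f '' (T' : Set X)) := fun hc =>
        hT m hmT (Submodule.span_mono (Set.image_mono (f := f) hsub) hc)
      have hm0 : f m ≠ 0 := fun h => hmn (h ▸ Submodule.zero_mem _)
      have hT'prop : ∀ j ∈ T', f j ∉ Submodule.span F (f '' {i | i ∈ T' ∧ i < j}) := by
        intro j hj hc
        refine hT j (mem_of_mem_erase hj) ?_
        refine Submodule.span_mono (Set.image_mono (f := f) ?_) hc
        rintro i ⟨hiT', hilt⟩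
        exact ⟨mem_of_mem_erase hiT', hilt⟩
      have ihT' := ih T' (erase_ssubset hmT) hT'prop
      have himg : f '' (T : Set X) = insert (f m) (f '' (T' : Set X)) := by
        rw [hT', ← Set.image_insert_eq]
        rw [coe_erase, Set.insert_diff_singleton, Set.insert_eq_self.2 (by exact_mod_cast hmT)]
      have hdisj : Disjoint (F ∙ f m) (Submodule.span F (f '' (T' : Set X))) :=
        ((Submodule.disjoint_span_singleton' hm0).2 hmn).symm
      have hrank : Module.finrank F (Submodule.span F (f '' (T : Set X)))
          = Module.finrank F (Submodule.span F (f '' (T' : Set X))) + 1 := by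
        rw [himg, Set.insert_eq, Submodule.span_union]
        have := Submodule.finrank_sup_add_finrank_inf_eq (F ∙ f m)
          (Submodule.span F (f '' (T' : Set X)))
        rw [hdisj.eq_bot, finrank_bot, add_zero, finrank_span_singleton hm0] at this
        omega
      have hcard : T.card = T'.card + 1 := by
        rw [hT', card_erase_of_mem hmT]
        have : 1 ≤ T.card := card_pos.2 hne
        omega
      omega

end aux

open Finset

section aux2

variable {F : Type*} [Field F] {d : ℕ}

noncomputable def ellF (a : Fin d → F) : (Fin d → F) →ₗ[F] F where
  toFun x := ∑ i, a i * x i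
  map_add' x y := by simp [mul_add, Finset.sum_add_distrib]
  map_smul' c x := by simp [Finset.mul_sum, mul_left_comm]

lemma ellF_apply (a x : Fin d → F) : ellF a x = ∑ i, a i * x i := rfl

lemma finrank_ker_ellF {a : Fin d → F} (ha : a ≠ 0) :
    Module.finrank F (LinearMap.ker (ellF a)) = d - 1 := by
  obtain ⟨i, hi⟩ : ∃ i, a i ≠ 0 := Function.ne_iff.1 ha
  have hsurj : Function.Surjective (ellF a) := by
    intro y
    refine ⟨Pi.single i ((a i)⁻¹ * y), ?_⟩
    rw [ellF_apply]
    rw [Finset.sum_eq_single i]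
    · rw [Pi.single_eq_same]
      field_simp
    · intro b _ hb
      simp [Pi.single_eq_of_ne hb]
    · simp
  have hr : LinearMap.range (ellF a) = ⊤ := LinearMap.range_eq_top.2 hsurj
  have h1 := LinearMap.finrank_range_add_finrank_ker (ellF a)
  rw [hr] at h1
  rw [finrank_top] at h1
  rw [Module.finrank_self] at h1
  have hd : Module.finrank F (Fin d → F) = d := by simp
  omega

end aux2

open Finset in
lemma core_lemma {X F : Type*} [Field F] [LinearOrder X] {d : ℕ} (hd : 2 ≤ d)
    (f : X → Fin d → F) (Y S : Finset X) (hSY : S ⊆ Y) (hScard : S.card = d)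
    (W : Submodule F (Fin d → F)) (hW : W ≠ ⊤) (hSW : ∀ x ∈ S, f x ∈ W) :
    (traces (zeroSets f) ↑Y).ncard < ∑ i ∈ Finset.range d, Y.card.choose i := by
  classical
  set PF : Finset (Finset X) := Y.powerset.filter
    (fun J => ∃ a : Fin d → F, a ≠ 0 ∧ J = Y.filter (fun c => ∑ i, a i * f c i = 0)) with hPF
  -- traces = coercions of members of PF
  have hzf : ∀ a : Fin d → F,
      zeroSet f a ∩ ↑Y = ↑(Y.filter (fun c => ∑ i, a i * f c i = 0)) := by
    intro a
    ext x
    simp [zeroSet, and_comm]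
  have htr : traces (zeroSets f) ↑Y = (fun J : Finset X => (↑J : Set X)) '' ↑PF := by
    ext A
    constructor
    · rintro ⟨B, ⟨a, ha, rfl⟩, rfl⟩
      exact ⟨Y.filter (fun c => ∑ i, a i * f c i = 0),
        by simp only [hPF, mem_coe, mem_filter, mem_powerset]
           exact ⟨filter_subset _ _, a, ha, rfl⟩,
        (hzf a).symm⟩
    · rintro ⟨J, hJ, rfl⟩
      simp only [hPF, mem_coe, mem_filter, mem_powerset] at hJ
      obtain ⟨hJY, a, ha, rfl⟩ := hJ
      exact ⟨zeroSet f a, ⟨a, ha, rfl⟩, hzf a⟩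
  have hncard : (traces (zeroSets f) ↑Y).ncard = PF.card := by
    rw [htr, Set.ncard_image_of_injective _ Finset.coe_injective, Set.ncard_coe_finset]
  -- key fact 2 : each pattern is recovered from its greedy basis
  have key2 : ∀ J ∈ PF, J = Y.filter (fun j => f j ∈ Submodule.span F (f '' ↑(greedyB f J))) := by
    intro J hJ
    simp only [hPF, mem_filter, mem_powerset] at hJ
    obtain ⟨hJY, a, ha, hJa⟩ := hJ
    ext j
    rw [mem_filter]
    constructor
    · intro hjJ
      exact ⟨hJY hjJ, mem_span_greedyB f J j hjJ⟩
    · rintro ⟨hjY, hfj⟩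
      have hspan : Submodule.span F (f '' ↑(greedyB f J)) ≤ LinearMap.ker (ellF a) := by
        rw [Submodule.span_le]
        rintro _ ⟨i, hi, rfl⟩
        have hiJ : i ∈ J := greedyB_subset f J (by exact_mod_cast hi)
        rw [hJa, mem_filter] at hiJ
        simpa [LinearMap.mem_ker, ellF_apply] using hiJ.2
      have hker := hspan hfj
      rw [LinearMap.mem_ker, ellF_apply] at hker
      rw [hJa, mem_filter]
      exact ⟨hjY, hker⟩
  -- key fact 3 : greedy bases are small
  have key3 : ∀ J ∈ PF, (greedyB f J).card ≤ d - 1 := by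
    intro J hJ
    simp only [hPF, mem_filter, mem_powerset] at hJ
    obtain ⟨hJY, a, ha, hJa⟩ := hJ
    have hprop : ∀ j ∈ greedyB f J, f j ∉ Submodule.span F
        (f '' {i | i ∈ greedyB f J ∧ i < j}) := by
      intro j hj hc
      refine ((mem_greedyB f).1 hj).2 ?_
      refine Submodule.span_mono (Set.image_mono (f := f) ?_) hc
      rintro i ⟨hig, hilt⟩
      exact ⟨greedyB_subset f J hig, hilt⟩
    have h1 := card_le_finrank_span f (greedyB f J) hprop
    have hspan : Submodule.span F (f '' ↑(greedyB f J)) ≤ LinearMap.ker (ellF a) := by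
      rw [Submodule.span_le]
      rintro _ ⟨i, hi, rfl⟩
      have hiJ : i ∈ J := greedyB_subset f J (by exact_mod_cast hi)
      rw [hJa, mem_filter] at hiJ
      simpa [LinearMap.mem_ker, ellF_apply] using hiJ.2
    have h2 : Module.finrank F (Submodule.span F (f '' ↑(greedyB f J)))
        ≤ Module.finrank F (LinearMap.ker (ellF a)) := Submodule.finrank_mono hspan
    rw [finrank_ker_ellF ha] at h2
    omega
  -- injectivity of the greedy basis map on patterns
  have hinjP : Set.InjOn (greedyB f) ↑PF := by
    intro J₁ h₁ J₂ h₂ he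
    rw [key2 J₁ (by exact_mod_cast h₁), key2 J₂ (by exact_mod_cast h₂), he]
  -- construct the missing set D₀
  obtain ⟨D₀, hD₀Y, hD₀card, hD₀ne⟩ : ∃ D₀ : Finset X, D₀ ⊆ Y ∧ D₀.card ≤ d - 1 ∧
      ∀ J ∈ PF, greedyB f J ≠ D₀ := by
    by_cases hzero : ∃ j ∈ Y, f j = 0
    · obtain ⟨j, hjY, hj0⟩ := hzero
      refine ⟨{j}, by simpa using hjY, by simp; omega, ?_⟩
      intro J _ he
      have hjg : j ∈ greedyB f J := he ▸ mem_singleton_self j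
      exact ((mem_greedyB f).1 hjg).2 (hj0 ▸ Submodule.zero_mem _)
    · push_neg at hzero
      -- S is linearly dependent
      have hdep : ∃ g : X → F, ∑ x ∈ S, g x • f x = 0 ∧ ∃ x ∈ S, g x ≠ 0 := by
        by_cases hinj : Set.InjOn f ↑S
        · set t : Finset W := S.attach.image (fun x => (⟨f x.1, hSW x.1 x.2⟩ : W)) with ht
          have htinj : ∀ x ∈ S.attach, ∀ y ∈ S.attach,
              (⟨f x.1, hSW x.1 x.2⟩ : W) = ⟨f y.1, hSW y.1 y.2⟩ → x = y := by
            intro x _ y _ hxy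
            have : f x.1 = f y.1 := congrArg Subtype.val hxy
            exact Subtype.ext (hinj x.2 y.2 this)
          have htcard : t.card = d := by
            rw [ht, card_image_of_injOn (fun x hx y hy => htinj x hx y hy), card_attach, hScard]
          have hfr : Module.finrank F W < t.card := by
            rw [htcard]
            have := Submodule.finrank_lt hW (K := F) (V := Fin d → F)
            have hdim : Module.finrank F (Fin d → F) = d := by simp
            omega
          obtain ⟨gW, hgsum, e, het, hge⟩ :=
            Module.exists_nontrivial_relation_of_finrank_lt_card hfr
          refine ⟨fun x => if h : x ∈ S then gW ⟨f x, hSW x h⟩ else 0, ?_, ?_⟩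
          · have : ∑ x ∈ S, (if h : x ∈ S then gW ⟨f x, hSW x h⟩ else 0) • f x
                = ∑ x ∈ S.attach, gW ⟨f x.1, hSW x.1 x.2⟩ • f x.1 := by
              rw [← Finset.sum_attach S (fun x => (if h : x ∈ S then gW ⟨f x, hSW x h⟩ else 0) • f x)]
              exact Finset.sum_congr rfl (fun x _ => by rw [dif_pos x.2])
            rw [this]
            have hc : ∑ x ∈ S.attach, gW ⟨f x.1, hSW x.1 x.2⟩ • f x.1
                = ((∑ e ∈ t, gW e • e : W) : Fin d → F) := by
              rw [ht, Finset.sum_image htinj]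
              push_cast
              rfl
            rw [hc, hgsum]
            rfl
          · obtain ⟨x, hxS, hxe⟩ : ∃ x ∈ S.attach, (⟨f x.1, hSW x.1 x.2⟩ : W) = e := by
              rw [ht] at het
              simpa using Finset.mem_image.1 het
            refine ⟨x.1, x.2, ?_⟩
            show (if h : (x : X) ∈ S then gW ⟨f x, hSW x h⟩ else 0) ≠ 0
            rw [dif_pos x.2]
            rw [hxe]
            exact hge
        · rw [Set.InjOn] at hinj
          push_neg at hinj
          obtain ⟨x, hx, y, hy, hfxy, hxy⟩ := hinj
          refine ⟨fun z => if z = x then 1 else if z = y then -1 else 0, ?_, x, hx, by simp⟩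
          rw [← Finset.add_sum_erase _ _ hx]
          have hy' : y ∈ S.erase x := mem_erase.2 ⟨fun h => hxy h.symm, hy⟩
          rw [← Finset.add_sum_erase _ _ hy']
          have hzz : ∀ z ∈ (S.erase x).erase y,
              (if z = x then (1:F) else if z = y then -1 else 0) • f z = 0 := by
            intro z hz
            have hz1 : z ≠ y := (mem_erase.1 hz).1
            have hz2 : z ≠ x := (mem_erase.1 (mem_of_mem_erase hz)).1
            simp [hz1, hz2]
          rw [Finset.sum_eq_zero hzz]
          have hyx : y ≠ x := fun h => hxy h.symm
          simp [hyx, hfxy]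
      -- minimal dependent subset (circuit)
      set DepS : Finset (Finset X) := S.powerset.filter
        (fun C => ∃ g : X → F, ∑ x ∈ C, g x • f x = 0 ∧ ∃ x ∈ C, g x ≠ 0) with hDepS
      have hSdep : S ∈ DepS := by
        rw [hDepS, mem_filter]
        exact ⟨mem_powerset_self S, hdep⟩
      obtain ⟨C, hCmem, hCmin⟩ := Finset.exists_min_image DepS Finset.card ⟨S, hSdep⟩
      rw [hDepS, mem_filter, mem_powerset] at hCmem
      obtain ⟨hCS, g, hgsum, x₁, hx₁C, hgx₁⟩ := hCmem
      have hall : ∀ c ∈ C, g c ≠ 0 := by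
        intro c hc hc0
        have herase : C.erase c ∈ DepS := by
          rw [hDepS, mem_filter, mem_powerset]
          refine ⟨(erase_subset _ _).trans hCS, g, ?_, x₁,
            mem_erase.2 ⟨fun h => hgx₁ (h ▸ hc0), hx₁C⟩, hgx₁⟩
          rwa [Finset.sum_erase _ (by rw [hc0, zero_smul])]
        have := hCmin _ herase
        have hlt := card_erase_lt_of_mem hc
        omega
      have hCne : C.Nonempty := ⟨x₁, hx₁C⟩
      have hC2 : 2 ≤ C.card := by
        rcases Nat.lt_or_ge C.card 2 with h | h
        · exfalso
          have h1 : C.card = 1 := by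
            have := card_pos.2 hCne
            omega
          obtain ⟨c, hc⟩ := Finset.card_eq_one.1 h1
          rw [hc, Finset.sum_singleton] at hgsum
          have hgc : g c ≠ 0 := hall c (hc ▸ mem_singleton_self c)
          have : f c = 0 := by
            rcases smul_eq_zero.1 hgsum with h' | h'
            · exact absurd h' hgc
            · exact h'
          exact hzero c (hSY (hCS (hc ▸ mem_singleton_self c))) this
        · exact h
      set c₀ := C.min' hCne with hc₀
      have hc₀C : c₀ ∈ C := C.min'_mem hCne
      refine ⟨C.erase c₀, (erase_subset _ _).trans (hCS.trans hSY), ?_, ?_⟩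
      · rw [card_erase_of_mem hc₀C]
        have := (card_le_card hCS).trans_eq hScard
        omega
      · intro J hJ he
        -- c₀ ∈ J
        have hc₀sp : f c₀ ∈ Submodule.span F (f '' ↑(C.erase c₀)) := by
          have hsum' := Finset.add_sum_erase C (fun x => g x • f x) hc₀C
          simp only [hgsum] at hsum'
          have : f c₀ = (g c₀)⁻¹ • (-(∑ x ∈ C.erase c₀, g x • f x)) := by
            have h' : g c₀ • f c₀ = -(∑ x ∈ C.erase c₀, g x • f x) := by
              linear_combination (norm := module) hsum'
            rw [← h', inv_smul_smul₀ (hall c₀ hc₀C)]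
          rw [this]
          refine Submodule.smul_mem _ _ (Submodule.neg_mem _ ?_)
          refine Submodule.sum_mem _ (fun x hx => ?_)
          exact Submodule.smul_mem _ _
            (Submodule.subset_span (Set.mem_image_of_mem f (by exact_mod_cast hx)))
        have hc₀J : c₀ ∈ J := by
          rw [key2 J hJ, mem_filter]
          refine ⟨hSY (hCS hc₀C), ?_⟩
          rw [he]
          exact hc₀sp
        have hJne : J.Nonempty := ⟨c₀, hc₀J⟩
        set j₀ := J.min' hJne with hj₀
        have hj₀J : j₀ ∈ J := J.min'_mem hJne
        have hJY : J ⊆ Y := by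
          have := hJ
          rw [hPF, mem_filter, mem_powerset] at this
          exact this.1
        have hj₀g : j₀ ∈ greedyB f J := by
          rw [mem_greedyB]
          refine ⟨hj₀J, ?_⟩
          have hempty : {i | i ∈ J ∧ i < j₀} = ∅ := by
            ext i
            simp only [Set.mem_setOf_eq, Set.mem_empty_iff_false, iff_false, not_and, not_lt]
            exact fun hi => J.min'_le i hi
          rw [hempty]
          simp only [Set.image_empty, Submodule.span_empty, Submodule.mem_bot]
          exact hzero j₀ (hJY hj₀J)
        rw [he] at hj₀g
        have hj₀C : j₀ ∈ C := mem_of_mem_erase hj₀g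
        have h1 : c₀ ≤ j₀ := C.min'_le j₀ hj₀C
        have h2 : j₀ ≤ c₀ := J.min'_le c₀ hc₀J
        have h3 : j₀ ≠ c₀ := (mem_erase.1 hj₀g).1
        exact h3 (le_antisymm h2 h1)
  -- final counting
  set big : Finset (Finset X) := Y.powerset.filter (fun D => D.card ≤ d - 1) with hbig
  have hD₀big : D₀ ∈ big := by
    rw [hbig, mem_filter, mem_powerset]
    exact ⟨hD₀Y, hD₀card⟩
  have hmap : ∀ J ∈ PF, greedyB f J ∈ big.erase D₀ := by
    intro J hJ
    refine mem_erase.2 ⟨hD₀ne J hJ, ?_⟩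
    rw [hbig, mem_filter, mem_powerset]
    have hJY : J ⊆ Y := by
      have := hJ
      rw [hPF, mem_filter, mem_powerset] at this
      exact this.1
    exact ⟨(greedyB_subset f J).trans hJY, key3 J hJ⟩
  have h1 : PF.card ≤ (big.erase D₀).card :=
    Finset.card_le_card_of_injOn _ hmap hinjP
  have h2 : (big.erase D₀).card < big.card := card_erase_lt_of_mem hD₀big
  have h3 : big.card = ∑ i ∈ Finset.range d, Y.card.choose i := by
    have hbig2 : big = (Finset.range d).biUnion (fun i => Y.powersetCard i) := by
      ext D
      simp only [hbig, mem_filter, mem_powerset, mem_biUnion, Finset.mem_range,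
        mem_powersetCard]
      constructor
      · rintro ⟨hDY, hDc⟩
        exact ⟨D.card, by omega, hDY, rfl⟩
      · rintro ⟨i, hi, hDY, rfl⟩
        exact ⟨hDY, by omega⟩
    rw [hbig2, Finset.card_biUnion]
    · exact Finset.sum_congr rfl (fun i _ => Finset.card_powersetCard i Y)
    · intro i _ j _ hij
      rw [Function.onFun, Finset.disjoint_left]
      intro D hDi hDj
      rw [mem_powersetCard] at hDi hDj
      exact hij (hDi.2 ▸ hDj.2)
  rw [hncard]
  omega

/-- If the image of `f : X → F^d` (`d ≥ 2`) is contained in a finite union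
of proper linear subspaces, then `C_f` is not maximal of VC-dimension `d - 1`: there is
`n ≥ d - 1` such that every `n`-element subset carries fewer than
`∑_{i=0}^{d-1} (n choose i)` traces.  Concretely, if the image is covered by `k` proper
subspaces, then every subset of size `n = k(d-1)+1` carries fewer than
`∑_{i=0}^{d-1} (n choose i)` traces. -/
theorem statement14 {X F : Type*} [Field F] {d : ℕ} (hd : 2 ≤ d) (f : X → Fin d → F)
    (hcov : ∃ (k : ℕ) (V : Fin k → Submodule F (Fin d → F)),
      (∀ i, V i ≠ ⊤) ∧ ∀ x : X, ∃ i, f x ∈ V i) :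
    (∃ n : ℕ, d - 1 ≤ n ∧ ∀ Y : Finset X, Y.card = n →
      (traces (zeroSets f) ↑Y).ncard < ∑ i ∈ Finset.range d, n.choose i) ∧
    (∀ (k : ℕ) (V : Fin k → Submodule F (Fin d → F)),
      (∀ i, V i ≠ ⊤) → (∀ x : X, ∃ i, f x ∈ V i) →
      ∀ Y : Finset X, Y.card = k * (d - 1) + 1 →
        (traces (zeroSets f) ↑Y).ncard <
          ∑ i ∈ Finset.range d, (k * (d - 1) + 1).choose i) := by
  classical
  letI : LinearOrder X := IsWellOrder.linearOrder WellOrderingRel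
  have main : ∀ (k : ℕ) (V : Fin k → Submodule F (Fin d → F)),
      (∀ i, V i ≠ ⊤) → (∀ x : X, ∃ i, f x ∈ V i) →
      ∀ Y : Finset X, Y.card = k * (d - 1) + 1 →
        (traces (zeroSets f) ↑Y).ncard <
          ∑ i ∈ Finset.range d, (k * (d - 1) + 1).choose i := by
    intro k V hV hxV Y hYcard
    choose g hg using hxV
    have hlt : (Finset.univ : Finset (Fin k)).card * (d - 1) < Y.card := by
      rw [hYcard, Finset.card_univ, Fintype.card_fin]
      omega
    obtain ⟨i, -, hi⟩ := Finset.exists_lt_card_fiber_of_mul_lt_card_of_maps_to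
      (fun x _ => Finset.mem_univ (g x)) hlt
    have hdle : d ≤ (Y.filter (fun x => g x = i)).card := by omega
    obtain ⟨S, hSsub, hScard⟩ := Finset.exists_subset_card_eq hdle
    have hcore := core_lemma hd f Y S (hSsub.trans (Finset.filter_subset _ _)) hScard
      (V i) (hV i) (fun x hx => by
        have hxf := (Finset.mem_filter.1 (hSsub hx)).2
        rw [← hxf]
        exact hg x)
    rwa [hYcard] at hcore
  constructor
  · obtain ⟨k, V, hV, hxV⟩ := hcov
    set V' : Fin (k + 1) → Submodule F (Fin d → F) := Fin.cons ⊥ V with hV'def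
    have hbot : (⊥ : Submodule F (Fin d → F)) ≠ ⊤ := by
      intro h
      have h1 : (fun _ => (1 : F)) ∈ (⊤ : Submodule F (Fin d → F)) := trivial
      rw [← h, Submodule.mem_bot] at h1
      have := congrFun h1 ⟨0, by omega⟩
      exact one_ne_zero this
    have hV' : ∀ i, V' i ≠ ⊤ := by
      intro i
      refine Fin.cases ?_ ?_ i
      · show V' 0 ≠ ⊤
        rw [hV'def, Fin.cons_zero]
        exact hbot
      · intro j
        show V' j.succ ≠ ⊤
        rw [hV'def, Fin.cons_succ]
        exact hV j
    have hxV' : ∀ x : X, ∃ i, f x ∈ V' i := by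
      intro x
      obtain ⟨i, hi⟩ := hxV x
      refine ⟨i.succ, ?_⟩
      rw [hV'def, Fin.cons_succ]
      exact hi
    refine ⟨(k + 1) * (d - 1) + 1, by nlinarith, ?_⟩
    exact main (k + 1) V' hV' hxV'
  · exact main
end

section
/- Fix an integer d ≥ 3 and an infinite field F. Let e_0, ..., e_{d-1} be the standard basis of F^d, let X = ∪_{i=0}^{d-2} span{e_0, e_{i+1}}, and let f : X → F^d be the inclusion map. Then C_f = {Z_{f,a} : a ∈ F^d, a ≠ 0} is maximal of Littlestone dimension d − 1 (for every n ≥ d − 1 there is an (X, C_f)-labeled tree of depth n with Σ_{i=0}^{d-1} C(n, i) well-labeled leaves), even though f(X) is contained in a finite union of 2-dimensional subspaces of F^d. -/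
namespace St16

/-! ### Counting boolean strings of bounded weight -/

lemma st16_count (n d : ℕ) :
    Nat.card {τ : Fin n → Bool // (Finset.univ.filter (fun k => τ k = true)).card < d}
      = ∑ i ∈ Finset.range d, n.choose i := by
  classical
  rw [Nat.card_eq_fintype_card, Fintype.card_subtype]
  have hT : (Finset.univ.filter
      (fun τ : Fin n → Bool => (Finset.univ.filter (fun k => τ k = true)).card < d)).card
      = ((Finset.range d).biUnion
          (fun i => Finset.powersetCard i (Finset.univ : Finset (Fin n)))).card := by
    apply Finset.card_bij (fun τ _ => Finset.univ.filter (fun k => τ k = true))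
    · intro τ hτ
      simp only [Finset.mem_filter, Finset.mem_univ, true_and] at hτ
      simp only [Finset.mem_biUnion, Finset.mem_range, Finset.mem_powersetCard]
      exact ⟨_, hτ, Finset.subset_univ _, rfl⟩
    · intro τ₁ h1 τ₂ h2 h
      funext k
      have := Finset.ext_iff.1 h k
      simp only [Finset.mem_filter, Finset.mem_univ, true_and] at this
      cases h1 : τ₁ k <;> cases h2 : τ₂ k <;> simp_all
    · intro s hs
      simp only [Finset.mem_biUnion, Finset.mem_range, Finset.mem_powersetCard] at hs
      obtain ⟨i, hi, -, hcard⟩ := hs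
      refine ⟨fun k => k ∈ s, ?_, ?_⟩
      · simp [Finset.mem_filter, hcard ▸ hi]
      · ext k; simp
  have hdisj : ∀ i ∈ Finset.range d, ∀ j ∈ Finset.range d, i ≠ j →
      Disjoint (Finset.powersetCard i (Finset.univ : Finset (Fin n)))
        (Finset.powersetCard j (Finset.univ : Finset (Fin n))) := by
    intro i _ j _ hij
    simp only [Finset.disjoint_left, Finset.mem_powersetCard]
    intro s hs1 hs2
    exact hij (hs1.2.symm.trans hs2.2)
  exact hT.trans (by
    rw [Finset.card_biUnion hdisj]
    apply Finset.sum_congr rfl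
    intro i _
    rw [Finset.card_powersetCard, Finset.card_univ, Fintype.card_fin])

/-! ### Weights of boolean strings and prefixes -/

/-- The weight (number of `true`s) of a boolean string. -/
def wt {k : ℕ} (σ : Fin k → Bool) : ℕ := (Finset.univ.filter (fun j => σ j = true)).card

/-- The number of `true`s of `τ` strictly before position `k`. -/
def pw {n : ℕ} (τ : Fin n → Bool) (k : Fin n) : ℕ :=
  (Finset.univ.filter (fun j => j < k ∧ τ j = true)).card

lemma wt_prefix {n : ℕ} (τ : Fin n → Bool) (k : Fin n) :
    wt (fun j : Fin k.val => τ (Fin.castLE k.isLt.le j)) = pw τ k := by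
  classical
  apply Finset.card_bij (fun j _ => Fin.castLE k.isLt.le j)
  · intro j hj
    simp only [Finset.mem_filter, Finset.mem_univ, true_and] at hj ⊢
    exact ⟨j.isLt, hj⟩
  · intro j1 _ j2 _ h
    exact Fin.castLE_injective _ h
  · intro j hj
    simp only [Finset.mem_filter, Finset.mem_univ, true_and] at hj
    refine ⟨⟨j.val, hj.1⟩, ?_, rfl⟩
    simp only [Finset.mem_filter, Finset.mem_univ, true_and]
    exact hj.2

lemma pw_lt_pw {n : ℕ} (τ : Fin n → Bool) {k k' : Fin n} (h : k < k') (hk : τ k = true) :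
    pw τ k < pw τ k' := by
  classical
  apply Finset.card_lt_card
  constructor
  · intro j hj
    simp only [Finset.mem_filter, Finset.mem_univ, true_and] at hj ⊢
    exact ⟨hj.1.trans h, hj.2⟩
  · intro hsub
    have := hsub (by simp [Finset.mem_filter, h, hk] : k ∈ _)
    simp only [Finset.mem_filter, Finset.mem_univ, true_and] at this
    exact absurd this.1 (lt_irrefl k)

lemma pw_inj {n : ℕ} (τ : Fin n → Bool) {k k' : Fin n} (hk : τ k = true) (hk' : τ k' = true)
    (h : pw τ k = pw τ k') : k = k' := by
  rcases lt_trichotomy k k' with hlt | heq | hgt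
  · exact absurd h (pw_lt_pw τ hlt hk).ne
  · exact heq
  · exact absurd h.symm (pw_lt_pw τ hgt hk').ne

lemma pw_lt_wt {n : ℕ} (τ : Fin n → Bool) {k : Fin n} (hk : τ k = true) :
    pw τ k < wt τ := by
  classical
  apply Finset.card_lt_card
  constructor
  · intro j hj
    simp only [Finset.mem_filter, Finset.mem_univ, true_and] at hj ⊢
    exact hj.2
  · intro hsub
    have := hsub (by simp [Finset.mem_filter, hk] : k ∈ _)
    simp only [Finset.mem_filter, Finset.mem_univ, true_and] at this
    exact absurd this.1 (lt_irrefl k)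

/-! ### The points labeling the nodes and the dot product computations -/

variable {F : Type*} [Field F] {d : ℕ}

lemma d_pos3 {d : ℕ} (hd : 3 ≤ d) : 0 < d := by omega

/-- The point labeling a node at depth `k` whose path has `j` ones so far. -/
def pt (hd : 3 ≤ d) (c : ℕ → F) (j k : ℕ) : Fin d → F :=
  (Pi.single (⟨0, d_pos3 hd⟩ : Fin d) (1 : F) : Fin d → F) +
    if h : j + 1 < d then c k • (Pi.single (⟨j + 1, h⟩ : Fin d) (1 : F) : Fin d → F) else 0

lemma dot_single (a : Fin d → F) (m : Fin d) (v : F) :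
    ∑ i, a i * (Pi.single m v : Fin d → F) i = a m * v := by
  classical
  rw [Finset.sum_eq_single m]
  · simp
  · intro i _ him
    simp [Pi.single_eq_of_ne him]
  · simp

lemma dot_pt (hd : 3 ≤ d) (c : ℕ → F) (a : Fin d → F) (j k : ℕ) :
    ∑ i, a i * pt hd c j k i =
      a ⟨0, d_pos3 hd⟩ + (if h : j + 1 < d then c k * a ⟨j + 1, h⟩ else 0) := by
  unfold pt
  split_ifs with h
  · simp only [Pi.add_apply, Pi.smul_apply, smul_eq_mul, mul_add]
    rw [Finset.sum_add_distrib, dot_single]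
    have : ∑ i, a i * (c k * (Pi.single (⟨j + 1, h⟩ : Fin d) (1 : F) : Fin d → F) i) =
        c k * ∑ i, a i * (Pi.single (⟨j + 1, h⟩ : Fin d) (1 : F) : Fin d → F) i := by
      rw [Finset.mul_sum]; apply Finset.sum_congr rfl; intro i _; ring
    rw [this, dot_single]
    ring
  · simp only [add_zero, Pi.add_apply, Pi.zero_apply]
    rw [dot_single, mul_one]

lemma pt_mem (hd : 3 ≤ d) (c : ℕ → F) (Xs : Set (Fin d → F))
    (hXs : Xs = ⋃ i ∈ {i : Fin d | i ≠ ⟨0, d_pos3 hd⟩},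
      (Submodule.span F
        ({Pi.single (⟨0, d_pos3 hd⟩ : Fin d) (1 : F), Pi.single i (1 : F)} : Set (Fin d → F)) :
        Set (Fin d → F)))
    (j k : ℕ) : pt hd c j k ∈ Xs := by
  rw [hXs]
  by_cases h : j + 1 < d
  · apply Set.mem_biUnion
      (show (⟨j + 1, h⟩ : Fin d) ∈ {i : Fin d | i ≠ ⟨0, d_pos3 hd⟩} by simp [Fin.ext_iff])
    rw [SetLike.mem_coe]
    unfold pt
    rw [dif_pos h]
    exact Submodule.add_mem _ (Submodule.subset_span (by simp))
      (Submodule.smul_mem _ _ (Submodule.subset_span (by simp)))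
  · apply Set.mem_biUnion
      (show (⟨1, by omega⟩ : Fin d) ∈ {i : Fin d | i ≠ ⟨0, d_pos3 hd⟩} by simp [Fin.ext_iff])
    rw [SetLike.mem_coe]
    unfold pt
    rw [dif_neg h, add_zero]
    exact Submodule.subset_span (by simp)

/-! ### The coefficient vectors for leaf labels -/

/-- The coefficient vector witnessing that a light leaf is well-labeled. -/
noncomputable def avec (c : ℕ → F) {n : ℕ} (τ : Fin n → Bool) : Fin d → F :=
  fun i => if i.val = 0 then 1 else
    if h : ∃ k, τ k = true ∧ pw τ k + 1 = i.val then -(c (h.choose).val)⁻¹ else 0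

lemma avec_ne_zero (c : ℕ → F) {n : ℕ} (τ : Fin n → Bool) (h0 : 0 < d) :
    avec (d := d) c τ ≠ 0 := by
  intro h
  have := congrFun h ⟨0, h0⟩
  simp [avec] at this

lemma avec_zero (c : ℕ → F) {n : ℕ} (τ : Fin n → Bool) (h0 : 0 < d) :
    avec (d := d) c τ ⟨0, h0⟩ = 1 := by simp [avec]

lemma avec_true (c : ℕ → F) {n : ℕ} {τ : Fin n → Bool} {k : Fin n} (hk : τ k = true)
    (h : pw τ k + 1 < d) : avec (d := d) c τ ⟨pw τ k + 1, h⟩ = -(c k.val)⁻¹ := by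
  have hex : ∃ k', τ k' = true ∧ pw τ k' + 1 = (⟨pw τ k + 1, h⟩ : Fin d).val := ⟨k, hk, rfl⟩
  unfold avec
  rw [if_neg (by simp), dif_pos hex]
  have hs := hex.choose_spec
  have : hex.choose = k :=
    pw_inj τ hs.1 hk (by have h2 : pw τ hex.choose + 1 = pw τ k + 1 := hs.2; omega)
  rw [this]

lemma avec_false (c : ℕ → F) (hc : Function.Injective c) (hc0 : ∀ m, c m ≠ 0)
    {n : ℕ} {τ : Fin n → Bool} {k : Fin n} (hk : τ k = false)
    (h : pw τ k + 1 < d) : 1 + c k.val * avec (d := d) c τ ⟨pw τ k + 1, h⟩ ≠ 0 := by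
  unfold avec
  rw [if_neg (by simp)]
  by_cases hex : ∃ k', τ k' = true ∧ pw τ k' + 1 = (⟨pw τ k + 1, h⟩ : Fin d).val
  · rw [dif_pos hex]
    have hs := hex.choose_spec
    set k₀ := hex.choose with hk₀
    have hne : k₀ ≠ k := by
      intro he; rw [he] at hs; rw [hk] at hs; exact absurd hs.1 (by simp)
    intro heq
    have hc0' : c k₀.val ≠ 0 := hc0 _
    have : c k.val = c k₀.val := by field_simp at heq; linear_combination -heq
    exact hne (Fin.ext (hc this).symm)
  · rw [dif_neg hex]
    simp

end St16

open St16 in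
/-- For `d ≥ 3`, `F` an infinite field, `X` the union of the planes
`span {e_0, e_i}` (`i ≠ 0`) in `F^d` and `f : X → F^d` the inclusion, `C_f` is maximal of
Littlestone dimension `d - 1`: for every `n ≥ d - 1` there is an `(X, C_f)`-labeled tree
of depth `n` with `∑_{i=0}^{d-1} (n choose i)` well-labeled leaves, even though `f(X)` is
covered by finitely many 2-dimensional subspaces. -/
theorem statement16 {F : Type*} [Field F] [Infinite F] {d : ℕ} (hd : 3 ≤ d)
    (Xs : Set (Fin d → F))
    (hXs : Xs = ⋃ i ∈ {i : Fin d | i ≠ ⟨0, by omega⟩},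
      (Submodule.span F
        ({Pi.single (⟨0, by omega⟩ : Fin d) (1 : F), Pi.single i (1 : F)} : Set (Fin d → F)) :
        Set (Fin d → F))) :
    (∀ n : ℕ, d - 1 ≤ n →
      ∃ (t : (k : ℕ) → (Fin k → Bool) → Xs) (L : (Fin n → Bool) → Set Xs),
        (∀ τ, L τ ∈ zeroSets (fun x : Xs => (x : Fin d → F))) ∧
        Nat.card {τ : Fin n → Bool // WellLabeledLeaf n t (L τ) τ} =
          ∑ i ∈ Finset.range d, n.choose i) ∧
    (∃ (k : ℕ) (V : Fin k → Submodule F (Fin d → F)),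
      (∀ i, Module.finrank F (V i) = 2) ∧ ∀ x ∈ Xs, ∃ i, x ∈ V i) := by
  classical
  -- choose infinitely many distinct nonzero scalars
  have hinf : ({(0 : F)}ᶜ : Set F).Infinite := (Set.finite_singleton 0).infinite_compl
  let e := hinf.natEmbedding
  set c : ℕ → F := fun m => (e m : F) with hcdef
  have hc : Function.Injective c := fun a b hab => e.injective (Subtype.ext hab)
  have hc0 : ∀ m, c m ≠ 0 := fun m => (e m).2
  set f : Xs → Fin d → F := fun x => (x : Fin d → F) with hfdef
  constructor
  · -- the tree
    intro n hn
    set t : (k : ℕ) → (Fin k → Bool) → Xs :=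
      fun k σ => ⟨pt hd c (wt σ) k, pt_mem hd c Xs hXs (wt σ) k⟩ with htdef
    set a0 : Fin d → F := fun i => if i.val = 0 then 1 else 0 with ha0def
    have ha0 : a0 ≠ 0 := by
      intro h
      have := congrFun h ⟨0, by omega⟩
      simp [ha0def] at this
    set L : (Fin n → Bool) → Set Xs :=
      fun τ => if wt τ < d then zeroSet f (avec c τ) else zeroSet f a0 with hLdef
    refine ⟨t, L, ?_, ?_⟩
    · intro τ
      by_cases h : wt τ < d
      · exact ⟨avec c τ, avec_ne_zero c τ (by omega), by rw [hLdef]; simp [h]⟩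
      · exact ⟨a0, ha0, by rw [hLdef]; simp [h]⟩
    · -- the count
      have key : ∀ τ : Fin n → Bool, WellLabeledLeaf n t (L τ) τ ↔ wt τ < d := by
        intro τ
        constructor
        · -- heavy leaves are not well-labeled
          intro hwll
          by_contra hheavy
          push_neg at hheavy
          have hLτ : L τ = zeroSet f a0 := by rw [hLdef]; simp [not_lt.mpr hheavy]
          -- τ has a true position
          have hne : (Finset.univ.filter (fun k => τ k = true)).Nonempty := by
            rw [← Finset.card_pos]
            have : 0 < d := by omega
            exact lt_of_lt_of_le this hheavy
          obtain ⟨k, hk⟩ := hne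
          simp only [Finset.mem_filter, Finset.mem_univ, true_and] at hk
          have := (hwll k).mpr hk
          rw [hLτ] at this
          have hdot : ∑ i, a0 i * pt hd c (wt (fun j : Fin k.val =>
              τ (Fin.castLE k.isLt.le j))) k.val i = 0 := this
          rw [dot_pt] at hdot
          have h1 : a0 ⟨0, by omega⟩ = 1 := by simp [ha0def]
          rw [h1] at hdot
          set j := wt (fun j : Fin k.val => τ (Fin.castLE k.isLt.le j)) with hjd
          by_cases hjlt : j + 1 < d
          · rw [dif_pos hjlt] at hdot
            have : a0 ⟨j + 1, hjlt⟩ = 0 := by simp [ha0def]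
            rw [this, mul_zero, add_zero] at hdot
            exact one_ne_zero hdot
          · rw [dif_neg hjlt, add_zero] at hdot
            exact one_ne_zero hdot
        · -- light leaves are well-labeled
          intro hlight
          have hLτ : L τ = zeroSet f (avec c τ) := by rw [hLdef]; simp [hlight]
          rw [hLτ]
          intro k
          have hmem : (t k.val (fun j : Fin k.val => τ (Fin.castLE k.isLt.le j))
                ∈ zeroSet f (avec c τ))
              ↔ ∑ i, avec (d := d) c τ i * pt hd c (pw τ k) k.val i = 0 := by
            rw [htdef]
            simp only [zeroSet, Set.mem_setOf_eq, hfdef]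
            rw [wt_prefix τ k]
          rw [hmem, dot_pt, avec_zero c τ (by omega)]
          cases hk : τ k with
          | true =>
            simp only [iff_true]
            have hplt : pw τ k + 1 < d := by
              have := pw_lt_wt τ hk
              omega
            rw [dif_pos hplt, avec_true c hk hplt]
            have := hc0 k.val
            field_simp
            ring
          | false =>
            simp only [Bool.false_eq_true, iff_false]
            by_cases hplt : pw τ k + 1 < d
            · rw [dif_pos hplt]
              exact avec_false c hc hc0 hk hplt
            · rw [dif_neg hplt, add_zero]
              exact one_ne_zero
      have := Nat.card_congr (Equiv.subtypeEquivRight key)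
      rw [this]
      exact st16_count n d
  · -- the finite cover by planes
    refine ⟨d, fun i => Submodule.span F
      ({Pi.single (⟨0, by omega⟩ : Fin d) (1 : F),
        Pi.single (if i = ⟨0, by omega⟩ then (⟨1, by omega⟩ : Fin d) else i) (1 : F)} :
        Set (Fin d → F)), ?_, ?_⟩
    · intro i
      set m : Fin d := if i = ⟨0, by omega⟩ then (⟨1, by omega⟩ : Fin d) else i with hm
      have hm0 : m ≠ ⟨0, by omega⟩ := by
        rw [hm]; split_ifs with h
        · simp [Fin.ext_iff]
        · exact h
      set v : Fin 2 → (Fin d → F) :=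
        ![Pi.single (⟨0, by omega⟩ : Fin d) (1 : F), Pi.single m (1 : F)] with hv
      have hvli : LinearIndependent F v := by
        rw [hv, linearIndependent_fin2]
        constructor
        · simp only [Matrix.cons_val_one, Matrix.head_cons]
          intro h0
          have := congrFun h0 m
          simp at this
        · intro a hEq
          have h2 := congrFun hEq ⟨0, by omega⟩
          simp only [Matrix.cons_val_one, Matrix.head_cons, Matrix.cons_val_zero,
            Pi.smul_apply] at h2
          rw [Pi.single_eq_of_ne (Ne.symm hm0), Pi.single_eq_same, smul_zero] at h2
          exact one_ne_zero h2.symm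
      have hrange : Set.range v =
          ({Pi.single (⟨0, by omega⟩ : Fin d) (1 : F), Pi.single m (1 : F)} :
            Set (Fin d → F)) := by
        rw [hv]
        ext x
        simp only [Matrix.range_cons, Matrix.range_empty, Set.union_empty,
          Set.mem_union, Set.mem_singleton_iff, Set.mem_insert_iff, Set.singleton_union]
      have := finrank_span_eq_card hvli
      rw [hrange] at this
      rw [this, Fintype.card_fin]
    · intro x hx
      rw [hXs] at hx
      simp only [Set.mem_iUnion, Set.mem_setOf_eq] at hx
      obtain ⟨i, hi, hmem⟩ := hx
      rw [SetLike.mem_coe] at hmem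
      refine ⟨i, ?_⟩
      simp only [if_neg hi]
      exact hmem
end

section
/- Let C be the set of all conic sections in ℝ², i.e., C = C_f for f : ℝ² → ℝ⁶ given by f(x, y) = (x², xy, y², x, y, 1). Then C has VC-dimension 5 and Littlestone dimension 5, and moreover C is maximal of VC-dimension 5 and maximal of Littlestone dimension 5. -/
/-- The moment map `(x, y) ↦ (x², xy, y², x, y, 1)` of the conic sections. -/
noncomputable def conicMap (p : ℝ × ℝ) : Fin 6 → ℝ :=
  ![p.1 ^ 2, p.1 * p.2, p.2 ^ 2, p.1, p.2, 1]


section Auxiliary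

lemma rolle_fin {g g' : ℝ → ℝ} (hg : ∀ x, HasDerivAt g (g' x) x)
    {m : ℕ} (t : Fin (m + 1) → ℝ) (ht : StrictMono t) (h0 : ∀ i, g (t i) = 0) :
    ∃ s : Fin m → ℝ, StrictMono s ∧ (∀ i, t 0 < s i) ∧ ∀ i, g' (s i) = 0 := by
  have hcont : Continuous g := Differentiable.continuous (fun x => (hg x).differentiableAt)
  have key : ∀ i : Fin m, ∃ c ∈ Set.Ioo (t i.castSucc) (t i.succ), g' c = 0 := by
    intro i
    exact exists_hasDerivAt_eq_zero (ht (show i.castSucc < i.succ from Fin.castSucc_lt_succ)) hcont.continuousOn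
      (by rw [h0, h0]) (fun x _ => hg x)
  choose s hs hs0 using key
  refine ⟨s, ?_, ?_, hs0⟩
  · intro i j hij
    calc s i < t i.succ := (hs i).2
      _ ≤ t j.castSucc := ht.monotone (by simp [Fin.le_def]; omega)
      _ < s j := (hs j).1
  · intro i
    exact lt_of_le_of_lt (ht.monotone (by simp [Fin.le_def])) (hs i).1

lemma fewnomial (c0 c1 c2 c3 c4 c6 : ℝ) (t : Fin 6 → ℝ) (ht : StrictMono t) (hp : 0 < t 0)
    (hroot : ∀ i, c0 + c1 * t i + c2 * t i ^ 2 + c3 * t i ^ 3 + c4 * t i ^ 4 + c6 * t i ^ 6 = 0) :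
    c0 = 0 ∧ c1 = 0 ∧ c2 = 0 ∧ c3 = 0 ∧ c4 = 0 ∧ c6 = 0 := by
  set f0 : ℝ → ℝ := fun x => c0 + c1 * x + c2 * x ^ 2 + c3 * x ^ 3 + c4 * x ^ 4 + c6 * x ^ 6 with hf0
  set f1 : ℝ → ℝ := fun x => c1 + 2*c2 * x + 3*c3 * x ^ 2 + 4*c4 * x ^ 3 + 6*c6 * x ^ 5 with hf1
  set f2 : ℝ → ℝ := fun x => 2*c2 + 6*c3 * x + 12*c4 * x ^ 2 + 30*c6 * x ^ 4 with hf2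
  set f3 : ℝ → ℝ := fun x => 6*c3 + 24*c4 * x + 120*c6 * x ^ 3 with hf3
  set f4 : ℝ → ℝ := fun x => 24*c4 + 360*c6 * x ^ 2 with hf4
  have H0 : ∀ x, HasDerivAt f0 (f1 x) x := by
    intro x
    have h := (((((hasDerivAt_const x c0).add ((hasDerivAt_id x).const_mul c1)).add
      ((hasDerivAt_pow 2 x).const_mul c2)).add ((hasDerivAt_pow 3 x).const_mul c3)).add
      ((hasDerivAt_pow 4 x).const_mul c4)).add ((hasDerivAt_pow 6 x).const_mul c6)
    exact h.congr_deriv (by push_cast; ring)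
  have H1 : ∀ x, HasDerivAt f1 (f2 x) x := by
    intro x
    have h := ((((hasDerivAt_const x c1).add ((hasDerivAt_id x).const_mul (2*c2))).add
      ((hasDerivAt_pow 2 x).const_mul (3*c3))).add ((hasDerivAt_pow 3 x).const_mul (4*c4))).add
      ((hasDerivAt_pow 5 x).const_mul (6*c6))
    exact h.congr_deriv (by push_cast; ring)
  have H2 : ∀ x, HasDerivAt f2 (f3 x) x := by
    intro x
    have h := (((hasDerivAt_const x (2*c2)).add ((hasDerivAt_id x).const_mul (6*c3))).add
      ((hasDerivAt_pow 2 x).const_mul (12*c4))).add ((hasDerivAt_pow 4 x).const_mul (30*c6))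
    exact h.congr_deriv (by push_cast; ring)
  have H3 : ∀ x, HasDerivAt f3 (f4 x) x := by
    intro x
    have h := ((hasDerivAt_const x (6*c3)).add ((hasDerivAt_id x).const_mul (24*c4))).add
      ((hasDerivAt_pow 3 x).const_mul (120*c6))
    exact h.congr_deriv (by push_cast; ring)
  obtain ⟨s1, hs1m, hs1p, hs1z⟩ := rolle_fin H0 t ht (fun i => hroot i)
  have hs1pos : 0 < s1 0 := lt_trans hp (hs1p 0)
  obtain ⟨s2, hs2m, hs2p, hs2z⟩ := rolle_fin H1 s1 hs1m hs1z
  have hs2pos : 0 < s2 0 := lt_trans hs1pos (hs2p 0)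
  obtain ⟨s3, hs3m, hs3p, hs3z⟩ := rolle_fin H2 s2 hs2m hs2z
  have hs3pos : 0 < s3 0 := lt_trans hs2pos (hs3p 0)
  obtain ⟨s4, hs4m, hs4p, hs4z⟩ := rolle_fin H3 s3 hs3m hs3z
  have hs4pos : 0 < s4 0 := lt_trans hs3pos (hs4p 0)
  have hu01 : s4 0 < s4 1 := hs4m (by norm_num)
  have e0 : 24*c4 + 360*c6 * (s4 0) ^ 2 = 0 := hs4z 0
  have e1 : 24*c4 + 360*c6 * (s4 1) ^ 2 = 0 := hs4z 1
  have hsq : s4 0 ^ 2 < s4 1 ^ 2 := by nlinarith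
  have hz : 360 * c6 * (s4 1 ^ 2 - s4 0 ^ 2) = 0 := by linarith
  have hc6 : c6 = 0 := by
    rcases mul_eq_zero.mp hz with h | h
    · rcases mul_eq_zero.mp h with h | h
      · norm_num at h
      · exact h
    · linarith
  have hc4 : c4 = 0 := by nlinarith
  have hc3 : c3 = 0 := by have := hs3z 0; simp [hf3, hc4, hc6] at this; linarith
  have hc2 : c2 = 0 := by have := hs2z 0; simp [hf2, hc3, hc4, hc6] at this; linarith
  have hc1 : c1 = 0 := by have := hs1z 0; simp [hf1, hc2, hc3, hc4, hc6] at this; linarith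
  have hc0 : c0 = 0 := by have := hroot 0; rw [hc1, hc2, hc3, hc4, hc6] at this; linarith
  exact ⟨hc0, hc1, hc2, hc3, hc4, hc6⟩

@[simp] lemma vec6_apply {α : Type*} (a b c d e f : α) :
    (![a,b,c,d,e,f] : Fin 6 → α) 0 = a ∧ (![a,b,c,d,e,f] : Fin 6 → α) 1 = b ∧
    (![a,b,c,d,e,f] : Fin 6 → α) 2 = c ∧ (![a,b,c,d,e,f] : Fin 6 → α) 3 = d ∧
    (![a,b,c,d,e,f] : Fin 6 → α) 4 = e ∧ (![a,b,c,d,e,f] : Fin 6 → α) 5 = f :=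
  ⟨rfl, rfl, rfl, rfl, rfl, rfl⟩

lemma vec6_five {α : Type*} (a b c d e f : α) : (![a,b,c,d,e,f] : Fin 6 → α) 5 = f := rfl

noncomputable def cpt (s : ℝ) : ℝ × ℝ := (s, s ^ 3)

lemma cpt_inj : Function.Injective cpt := fun a b h => congrArg Prod.fst h

lemma sum_conic (a : Fin 6 → ℝ) (s : ℝ) :
    ∑ i, a i * conicMap (cpt s) i =
      a 5 + a 3 * s + a 0 * s ^ 2 + a 4 * s ^ 3 + a 1 * s ^ 4 + a 2 * s ^ 6 := by
  simp [cpt, conicMap, Fin.sum_univ_six, Matrix.cons_val_succ, vec6_five]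
  ring

open Polynomial in
lemma exists_good (T Z : Finset ℝ) (hZT : Z ⊆ T) (hpos : ∀ s ∈ T, 0 < s) (hcard : Z.card ≤ 5) :
    ∃ a : Fin 6 → ℝ, a ≠ 0 ∧ ∀ s ∈ T, (cpt s ∈ zeroSet conicMap a ↔ s ∈ Z) := by
  classical
  set e : ℝ := ∑ z ∈ Z, z with he
  set q : ℝ[X] := (if Z.card = 5 then X + C e else 1) * ∏ z ∈ Z, (X - C z) with hq
  have hpm : (∏ z ∈ Z, (X - C z) : ℝ[X]).Monic :=
    monic_prod_of_monic _ _ fun z _ => monic_X_sub_C z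
  have hmonic : q.Monic := by
    refine Polynomial.Monic.mul ?_ hpm
    split_ifs
    · exact monic_X_add_C e
    · exact monic_one
  have hqne : q ≠ 0 := hmonic.ne_zero
  have hprodnd : (∏ z ∈ Z, (X - C z) : ℝ[X]).natDegree = Z.card := by
    rw [natDegree_prod _ _ fun z _ => X_sub_C_ne_zero z]
    simp
  have hnd : q.natDegree ≤ 6 := by
    refine le_trans natDegree_mul_le ?_
    have h1 : (if Z.card = 5 then X + C e else 1 : ℝ[X]).natDegree ≤ 1 := by
      split_ifs
      · exact le_of_eq (natDegree_X_add_C e)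
      · simp
    omega
  have hc5 : q.coeff 5 = 0 := by
    by_cases h5 : Z.card = 5
    · rw [hq, if_pos h5, add_mul, coeff_add]
      have h4 : (∏ z ∈ Z, (X - C z) : ℝ[X]).coeff 4 = -e := by
      -- nextCoeff
        have hn := prod_X_sub_C_nextCoeff (s := Z) (f := fun z => z)
        rw [nextCoeff_of_natDegree_pos (by rw [hprodnd, h5]; norm_num)] at hn
        rw [hprodnd, h5] at hn
        simpa [he] using hn
      have hlead : (∏ z ∈ Z, (X - C z) : ℝ[X]).coeff 5 = 1 := by
        have := hpm.coeff_natDegree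
        rwa [hprodnd, h5] at this
      rw [show (5 : ℕ) = 4 + 1 from rfl, coeff_X_mul, coeff_C_mul, h4, hlead]
      ring
    · rw [hq, if_neg h5, one_mul]
      exact coeff_eq_zero_of_natDegree_lt (by omega)
  refine ⟨![q.coeff 2, q.coeff 4, q.coeff 6, q.coeff 1, q.coeff 3, q.coeff 0], ?_, ?_⟩
  · intro h
    apply hqne
    ext n
    simp only [coeff_zero]
    have hcf : ∀ i : Fin 6, (![q.coeff 2, q.coeff 4, q.coeff 6, q.coeff 1, q.coeff 3, q.coeff 0]) i = 0 :=
      fun i => by rw [h]; rfl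
    rcases lt_or_ge n 7 with h7 | h7
    · interval_cases n
      · simpa using hcf 5
      · simpa using hcf 3
      · simpa using hcf 0
      · simpa using hcf 4
      · simpa using hcf 1
      · exact hc5
      · simpa using hcf 2
    · exact coeff_eq_zero_of_natDegree_lt (by omega)
  · intro s hs
    have heval : ∑ i, (![q.coeff 2, q.coeff 4, q.coeff 6, q.coeff 1, q.coeff 3, q.coeff 0]) i
        * conicMap (cpt s) i = q.eval s := by
      rw [sum_conic]
      rw [eval_eq_sum_range' (lt_of_le_of_lt hnd (by norm_num : (6:ℕ) < 7))]
      simp [Finset.sum_range_succ, hc5, Matrix.cons_val_succ, vec6_five]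
    have hfact : q.eval s = (if Z.card = 5 then s + e else 1) * ∏ z ∈ Z, (s - z) := by
      rw [hq]
      simp [eval_prod, apply_ite (eval s)]
    have hf1 : (if Z.card = 5 then s + e else 1) ≠ 0 := by
      split_ifs
      · have h0e : 0 ≤ e := Finset.sum_nonneg fun z hz => (hpos z (hZT hz)).le
        have := hpos s hs
        intro hcon
        linarith
      · norm_num
    constructor
    · intro hmem
      have h0 : q.eval s = 0 := by rw [← heval]; exact hmem
      rw [hfact] at h0
      rcases mul_eq_zero.mp h0 with h | h
      · exact absurd h hf1
      · obtain ⟨z, hz, hz0⟩ := Finset.prod_eq_zero_iff.mp h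
        have : s = z := by linarith [sub_eq_zero.mp hz0]
        rwa [this]
    · intro hsZ
      show ∑ i, _ * conicMap (cpt s) i = 0
      rw [heval, hfact, Finset.prod_eq_zero hsZ (by ring), mul_zero]

lemma zero_of_six (a : Fin 6 → ℝ) (t : Fin 6 → ℝ) (ht : StrictMono t) (h0 : 0 < t 0)
    (hz : ∀ i, ∑ j, a j * conicMap (cpt (t i)) j = 0) : a = 0 := by
  have hfew := fewnomial (a 5) (a 3) (a 0) (a 4) (a 1) (a 2) t ht h0
    (fun i => by rw [← sum_conic]; exact hz i)
  obtain ⟨h5, h3, h0', h4, h1, h2⟩ := hfew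
  funext i
  fin_cases i
  exacts [h0', h1, h2, h3, h4, h5]

lemma shatter_card_le (Y : Finset (ℝ × ℝ)) (hsh : ShattersSet (zeroSets conicMap) ↑Y) :
    Y.card ≤ 5 := by
  classical
  by_contra hcon
  push_neg at hcon
  obtain ⟨S, hSY, hS6⟩ := Finset.exists_subset_card_eq (by omega : 6 ≤ Y.card)
  let pe := S.equivFinOfCardEq hS6
  set p : Fin 6 → ℝ × ℝ := fun i => (pe.symm i : ℝ × ℝ) with hp
  have hpY : ∀ i, p i ∈ Y := fun i => hSY (pe.symm i).2
  have hpinj : Function.Injective p := by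
    intro i j h
    exact pe.symm.injective (Subtype.ext h)
  set w : Fin 6 → (Fin 6 → ℝ) := fun i => conicMap (p i) with hw
  by_cases hli : LinearIndependent ℝ w
  · obtain ⟨A, hA, hAY⟩ := hsh ↑Y subset_rfl
    obtain ⟨a, ha0, rfl⟩ := hA
    have hz : ∀ i, ∑ m, a m * w i m = 0 := by
      intro i
      have hm : p i ∈ zeroSet conicMap a ∩ ↑Y := by rw [hAY]; exact_mod_cast hpY i
      exact hm.1
    let φ : (Fin 6 → ℝ) →ₗ[ℝ] ℝ := ∑ m, a m • LinearMap.proj m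
    have hφ : ∀ v, φ v = ∑ m, a m * v m := by
      intro v
      simp [φ, LinearMap.sum_apply, LinearMap.proj_apply]
    have hcard : Fintype.card (Fin 6) = Module.finrank ℝ (Fin 6 → ℝ) := by
      simp [Module.finrank_fin_fun]
    let b := basisOfLinearIndependentOfCardEqFinrank hli hcard
    have hb : ⇑b = w := coe_basisOfLinearIndependentOfCardEqFinrank _ _
    have hspan : Submodule.span ℝ (Set.range w) = ⊤ := by rw [← hb]; exact b.span_eq
    have hker : ∀ v, φ v = 0 := by
      intro v
      have hle : Submodule.span ℝ (Set.range w) ≤ LinearMap.ker φ := by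
        rw [Submodule.span_le]
        rintro _ ⟨i, rfl⟩
        simpa [LinearMap.mem_ker, hφ] using hz i
      have hv : v ∈ Submodule.span ℝ (Set.range w) := by rw [hspan]; trivial
      exact hle hv
    apply ha0
    funext m
    have := hker (Pi.single m 1)
    rw [hφ] at this
    simpa [Pi.single_apply, mul_ite] using this
  · obtain ⟨g, hgsum, j, hgj⟩ := Fintype.not_linearIndependent_iff.mp hli
    obtain ⟨A, hA, hAY⟩ := hsh (↑Y \ {p j}) Set.diff_subset
    obtain ⟨a, ha0, rfl⟩ := hA
    have hzi : ∀ i, i ≠ j → ∑ m, a m * w i m = 0 := by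
      intro i hij
      have hmem : p i ∈ (↑Y \ {p j} : Set (ℝ × ℝ)) := ⟨hpY i, by simp [hpinj.ne hij]⟩
      rw [← hAY] at hmem
      exact hmem.1
    have hcol : ∀ m, ∑ i, g i * w i m = 0 := by
      intro m
      have := congrFun hgsum m
      simpa [Finset.sum_apply] using this
    have htot : ∑ i, g i * (∑ m, a m * w i m) = 0 := by
      have hcomm : ∑ i, g i * (∑ m, a m * w i m) = ∑ m, a m * (∑ i, g i * w i m) := by
        simp_rw [Finset.mul_sum]
        rw [Finset.sum_comm]
        refine Finset.sum_congr rfl fun m _ => Finset.sum_congr rfl fun i _ => by ring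
      rw [hcomm]
      simp [hcol]
    have hj0 : ∑ m, a m * w j m = 0 := by
      rw [Finset.sum_eq_single j (fun i _ hij => by rw [hzi i hij, mul_zero]) (by simp)] at htot
      rcases mul_eq_zero.mp htot with h | h
      · exact absurd h hgj
      · exact h
    have hmem : p j ∈ zeroSet conicMap a := hj0
    have : p j ∈ (↑Y \ {p j} : Set (ℝ × ℝ)) := by
      rw [← hAY]; exact ⟨hmem, by exact_mod_cast hpY j⟩
    simp at this

lemma root_card_le (a : Fin 6 → ℝ) (ha : a ≠ 0) (R : Finset ℝ) (hpos : ∀ s ∈ R, 0 < s)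
    (hroot : ∀ s ∈ R, cpt s ∈ zeroSet conicMap a) : R.card ≤ 5 := by
  by_contra hcon
  push_neg at hcon
  obtain ⟨U, hUR, hU6⟩ := Finset.exists_subset_card_eq (by omega : 6 ≤ R.card)
  set t : Fin 6 → ℝ := fun i => (U.orderIsoOfFin hU6 i : ℝ) with hts
  have htm : StrictMono t := fun i j hij =>
    Subtype.coe_lt_coe.mpr ((U.orderIsoOfFin hU6).strictMono hij)
  have htR : ∀ i, t i ∈ R := fun i => hUR (U.orderIsoOfFin hU6 i).2
  apply ha
  exact zero_of_six a t htm (hpos _ (htR 0)) (fun i => hroot _ (htR i))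

noncomputable def tpar (n : ℕ) : Finset ℝ := (Finset.range n).image (fun k : ℕ => ((k : ℝ) + 1))

lemma tpar_inj : Function.Injective (fun k : ℕ => ((k : ℝ) + 1)) := by
  intro a b h
  simp only at h
  exact_mod_cast (by linarith : (a : ℝ) = b)

lemma tpar_card (n : ℕ) : (tpar n).card = n := by
  rw [tpar, Finset.card_image_of_injective _ tpar_inj, Finset.card_range]

lemma tpar_pos (n : ℕ) : ∀ s ∈ tpar n, 0 < s := by
  intro s hs
  simp only [tpar, Finset.mem_image, Finset.mem_range] at hs
  obtain ⟨k, _, rfl⟩ := hs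
  positivity

noncomputable def Ypts (n : ℕ) : Finset (ℝ × ℝ) := (tpar n).image cpt

lemma Ypts_card (n : ℕ) : (Ypts n).card = n := by
  rw [Ypts, Finset.card_image_of_injective _ cpt_inj, tpar_card]

lemma trace_of_subset (n : ℕ) (W : Finset (ℝ × ℝ)) (hW : W ⊆ Ypts n) (hcard : W.card ≤ 5) :
    ∃ a : Fin 6 → ℝ, a ≠ 0 ∧ zeroSet conicMap a ∩ ↑(Ypts n) = ↑W := by
  classical
  set Wt : Finset ℝ := (tpar n).filter (fun s => cpt s ∈ W) with hWt
  have hWimg : Wt.image cpt = W := by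
    ext x
    simp only [Finset.mem_image, hWt, Finset.mem_filter]
    constructor
    · rintro ⟨s, ⟨_, hs2⟩, rfl⟩; exact hs2
    · intro hx
      obtain ⟨s, hs, rfl⟩ := Finset.mem_image.mp (hW hx)
      exact ⟨s, ⟨hs, hx⟩, rfl⟩
  have hWtcard : Wt.card ≤ 5 := by
    rw [← hWimg, Finset.card_image_of_injective _ cpt_inj] at hcard
    exact hcard
  obtain ⟨a, ha0, hspec⟩ := exists_good (tpar n) Wt (Finset.filter_subset _ _) (tpar_pos n) hWtcard
  refine ⟨a, ha0, ?_⟩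
  ext x
  simp only [Set.mem_inter_iff, Finset.coe_image, Finset.mem_coe]
  constructor
  · rintro ⟨hx1, hx2⟩
    obtain ⟨s, hs, rfl⟩ := Finset.mem_image.mp (by exact_mod_cast hx2 : x ∈ Ypts n)
    have := (hspec s hs).mp hx1
    rw [hWt, Finset.mem_filter] at this
    exact this.2
  · intro hx
    obtain ⟨s, hs, rfl⟩ := Finset.mem_image.mp (hW hx)
    have hsW : s ∈ Wt := by rw [hWt, Finset.mem_filter]; exact ⟨hs, hx⟩
    exact ⟨(hspec s hs).mpr hsW, by exact_mod_cast hW hx⟩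

lemma trace_small (n : ℕ) (a : Fin 6 → ℝ) (ha : a ≠ 0) :
    ∃ W : Finset (ℝ × ℝ), W ⊆ Ypts n ∧ W.card ≤ 5 ∧
      zeroSet conicMap a ∩ ↑(Ypts n) = ↑W := by
  classical
  set W : Finset (ℝ × ℝ) := (Ypts n).filter (· ∈ zeroSet conicMap a) with hWdef
  refine ⟨W, Finset.filter_subset _ _, ?_, ?_⟩
  · set Wt : Finset ℝ := (tpar n).filter (fun s => cpt s ∈ zeroSet conicMap a) with hWt
    have hWimg : Wt.image cpt = W := by
      ext x
      simp only [Finset.mem_image, hWt, Finset.mem_filter, hWdef, Ypts]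
      constructor
      · rintro ⟨s, ⟨hs1, hs2⟩, rfl⟩
        exact ⟨⟨s, hs1, rfl⟩, hs2⟩
      · rintro ⟨⟨s, hs, rfl⟩, hx2⟩
        exact ⟨s, ⟨hs, hx2⟩, rfl⟩
    have := root_card_le a ha Wt (fun s hs => tpar_pos n s (Finset.mem_filter.mp hs).1)
      (fun s hs => (Finset.mem_filter.mp hs).2)
    rw [← hWimg, Finset.card_image_of_injective _ cpt_inj]
    exact this
  · ext x
    simp only [hWdef, Finset.coe_filter, Set.mem_inter_iff, Set.mem_setOf_eq, Finset.mem_coe]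
    tauto

lemma count_powerset {α : Type*} [DecidableEq α] (s : Finset α) :
    (s.powerset.filter (fun w => w.card ≤ 5)).card = ∑ i ∈ Finset.range 6, s.card.choose i := by
  have h : s.powerset.filter (fun w => w.card ≤ 5)
      = (Finset.range 6).biUnion (fun i => s.powersetCard i) := by
    ext w
    simp only [Finset.mem_filter, Finset.mem_powerset, Finset.mem_biUnion, Finset.mem_range,
      Finset.mem_powersetCard]
    constructor
    · rintro ⟨h1, h2⟩; exact ⟨w.card, by omega, h1, rfl⟩
    · rintro ⟨i, hi, h1, h2⟩; exact ⟨h1, by omega⟩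
  rw [h, Finset.card_biUnion]
  · exact Finset.sum_congr rfl fun i _ => Finset.card_powersetCard i s
  · intro i _ j _ hij
    simp only [Finset.disjoint_left, Finset.mem_powersetCard]
    rintro w ⟨-, h1⟩ ⟨-, h2⟩
    omega

lemma traces_eq (n : ℕ) : traces (zeroSets conicMap) ↑(Ypts n)
    = (fun W : Finset (ℝ × ℝ) => (W : Set (ℝ × ℝ))) ''
      ↑((Ypts n).powerset.filter (fun w => w.card ≤ 5)) := by
  classical
  ext S
  constructor
  · rintro ⟨A, hA, rfl⟩
    obtain ⟨a, ha, rfl⟩ := hA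
    obtain ⟨W, hW1, hW2, hW3⟩ := trace_small n a ha
    exact ⟨W, by simp [Finset.mem_filter, Finset.mem_powerset, hW1, hW2], hW3.symm⟩
  · rintro ⟨W, hWmem, rfl⟩
    simp only [Finset.coe_filter, Set.mem_setOf_eq, Finset.mem_powerset] at hWmem
    obtain ⟨a, ha, hEq⟩ := trace_of_subset n W hWmem.1 hWmem.2
    exact ⟨zeroSet conicMap a, ⟨a, ha, rfl⟩, hEq⟩

lemma traces_ncard (n : ℕ) : (traces (zeroSets conicMap) ↑(Ypts n)).ncard
    = ∑ i ∈ Finset.range 6, n.choose i := by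
  classical
  rw [traces_eq, Set.ncard_image_of_injective _ Finset.coe_injective, Set.ncard_coe_finset,
    count_powerset, Ypts_card]

section Tree

noncomputable def eps (p : ℝ × ℝ) : (Fin 6 → ℝ) →ₗ[ℝ] ℝ :=
  ∑ i, conicMap p i • LinearMap.proj i

lemma eps_apply (p : ℝ × ℝ) (a : Fin 6 → ℝ) : eps p a = ∑ i, a i * conicMap p i := by
  simp [eps, LinearMap.sum_apply, LinearMap.proj_apply, mul_comm]

lemma mem_zeroSet_iff (p : ℝ × ℝ) (a : Fin 6 → ℝ) :
    p ∈ zeroSet conicMap a ↔ eps p a = 0 := by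
  rw [eps_apply]; rfl

variable (t : (k : ℕ) → (Fin k → Bool) → ℝ × ℝ)

noncomputable def Vs (k : ℕ) (σ : Fin k → Bool) : Submodule ℝ (Fin 6 → ℝ) :=
  ⨅ (j : Fin k) (_ : σ j = true),
    LinearMap.ker (eps (t j.val (fun i : Fin j.val => σ (Fin.castLE j.isLt.le i))))

lemma mem_Vs {k : ℕ} {σ : Fin k → Bool} {a : Fin 6 → ℝ} :
    a ∈ Vs t k σ ↔ ∀ j : Fin k, σ j = true →
      eps (t j.val (fun i : Fin j.val => σ (Fin.castLE j.isLt.le i))) a = 0 := by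
  simp [Vs, Submodule.mem_iInf, LinearMap.mem_ker]

open Classical in
noncomputable def dec (k : ℕ) (σ : Fin k → Bool) : Bool :=
  if ∃ a ∈ Vs t k σ, eps (t k σ) a ≠ 0 then true else false

noncomputable def pref : (k : ℕ) → Fin k → Bool
  | 0 => Fin.elim0
  | k+1 => Fin.snoc (pref k) (dec t k (pref k))

lemma pref_restrict : ∀ m k (h : k ≤ m) (j : Fin k),
    pref t m (Fin.castLE h j) = pref t k j := by
  intro m
  induction m with
  | zero => intro k h j; interval_cases k; exact j.elim0
  | succ m ih =>
    intro k h j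
    rcases Nat.lt_or_ge k (m + 1) with hk | hk
    · have hk' : k ≤ m := by omega
      have hcast : Fin.castLE h j = Fin.castSucc (Fin.castLE hk' j) := by
        apply Fin.ext; rfl
      rw [hcast, pref, Fin.snoc_castSucc]
      exact ih k hk' j
    · have hkm : k = m + 1 := by omega
      subst hkm
      have : Fin.castLE h j = j := by apply Fin.ext; rfl
      rw [this]

lemma pref_restrict_fun (m k : ℕ) (h : k ≤ m) :
    (fun j : Fin k => pref t m (Fin.castLE h j)) = pref t k :=
  funext fun j => pref_restrict t m k h j

lemma pref_succ_last (k : ℕ) : pref t (k+1) (Fin.last k) = dec t k (pref t k) := by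
  rw [pref, Fin.snoc_last]

lemma pref_at (m k : ℕ) (h : k < m) : pref t m ⟨k, h⟩ = dec t k (pref t k) := by
  have h1 : (⟨k, h⟩ : Fin m) = Fin.castLE h (Fin.last k) := by apply Fin.ext; rfl
  rw [h1, pref_restrict t m (k+1) h (Fin.last k), pref_succ_last]

lemma no_tree (n : ℕ) (hn : 6 ≤ n) : ¬ HasWellLabeledTree (zeroSets conicMap) n := by
  rintro ⟨t, L, hL, hW⟩
  classical
  set τ : Fin n → Bool := pref t n with hτ
  obtain ⟨a, ha0, hLa⟩ := hL τ
  have hwl := hW τ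
  rw [hLa] at hwl
  -- membership characterization along the branch
  have hmem : ∀ k : Fin n, (eps (t k.val (pref t k.val)) a = 0) ↔ τ k = true := by
    intro k
    have := hwl k
    rw [mem_zeroSet_iff] at this
    rwa [show (fun j : Fin k.val => τ (Fin.castLE k.isLt.le j)) = pref t k.val from
      pref_restrict_fun t n k.val k.isLt.le] at this
  have haVs : ∀ k, k ≤ n → a ∈ Vs t k (pref t k) := by
    intro k hk
    rw [mem_Vs]
    intro j hj
    rw [pref_restrict_fun t k j.val j.isLt.le]
    have hjn : (j : ℕ) < n := lt_of_lt_of_le j.isLt hk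
    have hjτ : τ ⟨j, hjn⟩ = true := by
      rw [hτ, ← hj]
      have : (⟨j, hjn⟩ : Fin n) = Fin.castLE hk j := by apply Fin.ext; rfl
      rw [this, pref_restrict t n k hk j]
    exact (hmem ⟨j, hjn⟩).mpr hjτ
  by_cases hall : ∀ k < 6, dec t k (pref t k) = true
  · -- dimension drops 6 times
    have hstrict : ∀ k < 6, Vs t (k+1) (pref t (k+1)) < Vs t k (pref t k) := by
      intro k hk
      have hdec := hall k hk
      rw [dec] at hdec
      split_ifs at hdec with hex
      · obtain ⟨b, hbV, hbne⟩ := hex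
        rw [SetLike.lt_iff_le_and_exists]
        refine ⟨?_, b, hbV, ?_⟩
        · intro c hc
          rw [mem_Vs] at hc ⊢
          intro j hj
          have hjlab : pref t (k+1) (Fin.castSucc j) = pref t k j := by
            have : Fin.castSucc j = Fin.castLE (Nat.le_succ k) j := by apply Fin.ext; rfl
            rw [this, pref_restrict]
          have := hc (Fin.castSucc j) (by rw [hjlab]; exact hj)
          rwa [show (fun i : Fin (Fin.castSucc j).val => pref t (k+1)
            (Fin.castLE (Fin.castSucc j).isLt.le i)) = (fun i : Fin j.val => pref t k
            (Fin.castLE j.isLt.le i)) from ?_] at this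
          funext i
          rw [pref_restrict, pref_restrict]
          rfl
        · intro hbV1
          rw [mem_Vs] at hbV1
          have := hbV1 (Fin.last k) (by rw [pref_succ_last]; exact hall k hk)
          rw [show (fun i : Fin (Fin.last k).val => pref t (k+1)
            (Fin.castLE (Fin.last k).isLt.le i)) = pref t k from
            pref_restrict_fun t (k+1) k (Nat.le_succ k)] at this
          exact hbne this
    have hrank : ∀ k ≤ 6, Module.finrank ℝ (Vs t k (pref t k)) + k ≤ 6 := by
      intro k hk
      induction k with
      | zero => simpa using Submodule.finrank_le (Vs t 0 (pref t 0))
      | succ k ih =>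
        have h1 := Submodule.finrank_lt_finrank_of_lt (hstrict k (by omega))
        have h2 := ih (by omega)
        omega
    have h6 : Vs t 6 (pref t 6) = ⊥ := by
      have := hrank 6 le_rfl
      have hz : Module.finrank ℝ (Vs t 6 (pref t 6)) = 0 := by omega
      exact Submodule.finrank_eq_zero.mp hz
    have := haVs 6 hn
    rw [h6] at this
    exact ha0 (Submodule.mem_bot _ |>.mp this)
  · push_neg at hall
    obtain ⟨k, hk6, hkdec⟩ := hall
    have hkn : k < n := lt_of_lt_of_le hk6 hn
    have hτk : τ ⟨k, hkn⟩ = false := by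
      rw [hτ, pref_at t n k hkn]
      simpa using hkdec
    rw [dec] at hkdec
    split_ifs at hkdec with hex
    · simp at hkdec
    · push_neg at hex
      have := hex a (haVs k (le_of_lt hkn))
      have htk : τ ⟨k, hkn⟩ = true := (hmem ⟨k, hkn⟩).mp this
      rw [hτk] at htk
      exact Bool.false_ne_true htk

open Classical in
lemma tree_construct (n : ℕ) :
    ∃ (t : (k : ℕ) → (Fin k → Bool) → ℝ × ℝ) (L : (Fin n → Bool) → Set (ℝ × ℝ)),
      (∀ τ, L τ ∈ zeroSets conicMap) ∧
      ∀ τ : Fin n → Bool, (WellLabeledLeaf n t (L τ) τ ↔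
        (Finset.univ.filter (fun k => τ k = true)).card ≤ 5) := by

  classical
  set Zt : (Fin n → Bool) → Finset ℝ :=
    fun τ => (Finset.univ.filter (fun k : Fin n => τ k = true)).image
      (fun k : Fin n => ((k : ℕ) : ℝ) + 1) with hZt
  have hinj : Function.Injective (fun k : Fin n => ((k : ℕ) : ℝ) + 1) := by
    intro i j h
    exact Fin.ext (tpar_inj h)
  have hZsub : ∀ τ, Zt τ ⊆ tpar n := by
    intro τ s hs
    simp only [hZt, Finset.mem_image, Finset.mem_filter] at hs
    obtain ⟨k, _, rfl⟩ := hs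
    exact Finset.mem_image.mpr ⟨(k : ℕ), Finset.mem_range.mpr k.isLt, rfl⟩
  have hZcard : ∀ τ, (Zt τ).card = (Finset.univ.filter (fun k => τ k = true)).card := by
    intro τ
    rw [hZt]
    exact Finset.card_image_of_injective _ hinj
  have hmemZ : ∀ (τ : Fin n → Bool) (k : Fin n), (((k : ℕ) : ℝ) + 1) ∈ Zt τ ↔ τ k = true := by
    intro τ k
    simp only [hZt, Finset.mem_image, Finset.mem_filter, Finset.mem_univ, true_and]
    constructor
    · rintro ⟨k', hk', hkk⟩
      rwa [← hinj hkk]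
    · intro h
      exact ⟨k, h, rfl⟩
  have hone : (fun _ : Fin 6 => (1 : ℝ)) ≠ 0 := by
    intro h
    have := congrFun h 0
    norm_num at this
  refine ⟨fun k _ => cpt ((k : ℝ) + 1),
    fun τ => if h : (Finset.univ.filter (fun k => τ k = true)).card ≤ 5 then
      zeroSet conicMap (Classical.choose (exists_good (tpar n) (Zt τ) (hZsub τ) (tpar_pos n)
        (by rw [hZcard]; exact h)))
    else zeroSet conicMap (fun _ => 1), ?_, ?_⟩
  · intro τ
    dsimp only
    split_ifs with h
    · exact ⟨_, (Classical.choose_spec (exists_good (tpar n) (Zt τ) (hZsub τ) (tpar_pos n)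
        (by rw [hZcard]; exact h))).1, rfl⟩
    · exact ⟨fun _ => 1, hone, rfl⟩
  · intro τ
    constructor
    · intro hwl
      by_contra h6
      dsimp only at hwl
      rw [dif_neg h6] at hwl
      set a : Fin 6 → ℝ := fun _ => 1 with ha'
      have ha := hone
      have hroots : ∀ s ∈ Zt τ, cpt s ∈ zeroSet conicMap a := by
        intro s hs
        simp only [hZt, Finset.mem_image, Finset.mem_filter, Finset.mem_univ, true_and] at hs
        obtain ⟨k, hk, rfl⟩ := hs
        exact (hwl k).mpr hk
      have := root_card_le a ha (Zt τ) (fun s hs => tpar_pos n s (hZsub τ hs)) hroots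
      rw [hZcard] at this
      exact h6 this
    · intro h5
      dsimp only
      rw [dif_pos h5]
      have hspec := (Classical.choose_spec (exists_good (tpar n) (Zt τ) (hZsub τ) (tpar_pos n)
        (by rw [hZcard]; exact h5))).2
      intro k
      have hmem : (((k : ℕ) : ℝ) + 1) ∈ tpar n :=
        Finset.mem_image.mpr ⟨(k : ℕ), Finset.mem_range.mpr k.isLt, rfl⟩
      rw [hspec _ hmem, hmemZ]


lemma count_bool (n : ℕ) :
    Nat.card {τ : Fin n → Bool // (Finset.univ.filter (fun k => τ k = true)).card ≤ 5}
      = ∑ i ∈ Finset.range 6, n.choose i := by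
  classical
  rw [Nat.card_eq_fintype_card]
  let e : (Fin n → Bool) ≃ Finset (Fin n) :=
    { toFun := fun τ => Finset.univ.filter (fun k => τ k = true)
      invFun := fun W k => decide (k ∈ W)
      left_inv := by
        intro τ
        funext k
        simp
      right_inv := by
        intro W
        ext k
        simp }
  refine Eq.trans (Fintype.card_congr (Equiv.subtypeEquiv e (q := fun W => W.card ≤ 5)
    (fun τ => Iff.rfl))) ?_
  rw [Fintype.card_subtype]
  have h : (Finset.univ : Finset (Finset (Fin n))) = (Finset.univ : Finset (Fin n)).powerset :=
    Finset.powerset_univ.symm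
  rw [h, count_powerset]
  simp

end Tree

end Auxiliary

/-- The family of conic sections in `ℝ²` has VC-dimension `5` and
Littlestone dimension `5`, and is maximal of VC-dimension `5` and of Littlestone
dimension `5`. -/
theorem statement18 :
    ((∃ Y : Finset (ℝ × ℝ), Y.card = 5 ∧ ShattersSet (zeroSets conicMap) ↑Y) ∧
      (∀ Y : Finset (ℝ × ℝ), ShattersSet (zeroSets conicMap) ↑Y → Y.card ≤ 5)) ∧
    (HasWellLabeledTree (zeroSets conicMap) 5 ∧
      (∀ n : ℕ, 6 ≤ n → ¬ HasWellLabeledTree (zeroSets conicMap) n)) ∧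
    (∀ n : ℕ, 5 ≤ n → ∃ Y : Finset (ℝ × ℝ), Y.card = n ∧
      (traces (zeroSets conicMap) ↑Y).ncard = ∑ i ∈ Finset.range 6, n.choose i) ∧
    (∀ n : ℕ, 5 ≤ n →
      ∃ (t : (k : ℕ) → (Fin k → Bool) → ℝ × ℝ) (L : (Fin n → Bool) → Set (ℝ × ℝ)),
        (∀ τ, L τ ∈ zeroSets conicMap) ∧
        Nat.card {τ : Fin n → Bool // WellLabeledLeaf n t (L τ) τ} =
          ∑ i ∈ Finset.range 6, n.choose i) := by
  classical
  refine ⟨⟨?_, shatter_card_le⟩, ⟨?_, no_tree⟩, ?_, ?_⟩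
  · refine ⟨Ypts 5, Ypts_card 5, ?_⟩
    intro Z hZ
    set Zf : Finset (ℝ × ℝ) := (Ypts 5).filter (· ∈ Z) with hZf
    have hZfc : (↑Zf : Set (ℝ × ℝ)) = Z := by
      ext x
      simp only [hZf, Finset.coe_filter, Set.mem_setOf_eq]
      exact ⟨fun h => h.2, fun h => ⟨by exact_mod_cast hZ h, h⟩⟩
    have hcard : Zf.card ≤ 5 :=
      le_trans (Finset.card_filter_le _ _) (le_of_eq (Ypts_card 5))
    obtain ⟨a, ha, hEq⟩ := trace_of_subset 5 Zf (Finset.filter_subset _ _) hcard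
    exact ⟨zeroSet conicMap a, ⟨a, ha, rfl⟩, by rw [hEq, hZfc]⟩
  · obtain ⟨t, L, hL, hiff⟩ := tree_construct 5
    refine ⟨t, L, hL, fun τ => (hiff τ).mpr ?_⟩
    calc (Finset.univ.filter (fun k => τ k = true)).card
        ≤ (Finset.univ : Finset (Fin 5)).card := Finset.card_filter_le _ _
      _ = 5 := by simp
  · intro n _
    exact ⟨Ypts n, Ypts_card n, traces_ncard n⟩
  · intro n _
    obtain ⟨t, L, hL, hiff⟩ := tree_construct n
    exact ⟨t, L, hL,
      Eq.trans (Nat.card_congr (Equiv.subtypeEquivRight hiff)) (count_bool n)⟩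
end
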